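/- Let $N \in \mathbb{N}^+ \cup \{+\infty\}$, let $\mathbf{s} \geq 0$, $\gamma \geq 0$ with $\mathbf{s} + \gamma > 1/2$, and let $\tau > 0$, $\lambda \in \mathbb{R}$. For $z \in \pi_N L^2(\mathbb{T}) \cap H^{\mathbf{s}+\gamma}$, define the map $\Phi_\tau$ in Fourier coordinates by $\widehat{(\Phi_\tau(z))}_k = e^{-\mathbf{i}\beta k^2}\Big(\hat z_k + \mathbf{i}\lambda \sum_{k+k_1=k_2+k_3,\,|k_i|\leq N} c_{k_1} \overline{\hat z_{k_1}}\hat z_{k_2}\hat z_{k_3}\Big)$, where $\beta \in \mathbb{R}$ and the coefficients satisfy $|c_{k_1}| \leq \tau$ for all $k_1$. Then there exists a strictly increasing function $C : \mathbb{R}_{\geq 0}^2 \to \mathbb{R}_{\geq 0}$ (independent of $\tau, \beta, N$) such that for all $w, z \in \pi_N L^2 \cap H^{\mathbf{s}+\gamma}$, $\|\Phi_\tau(w) - \Phi_\tau(z)\|_{H^{\mathbf{s}}} \leq \big(1 + \tau\, C(\|w\|_{H^{\mathbf{s}+\gamma}}, \|z\|_{H^{\mathbf{s}+\gamma}})\big)\|w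 - z\|_{H^{\mathbf{s}}}$. -/

import Mathlib

/-- Sobolev `H^r` norm of a sequence of Fourier coefficients:
`‖ψ‖_{H^r}² = ∑_m (1 + m^{2r}) |ψ_m|²`. -/
noncomputable def sobNorm (r : ℝ) (ψ : ℤ → ℂ) : ℝ :=
  Real.sqrt (∑' m : ℤ, (1 + (((m : ℝ) ^ 2) ^ r)) * ‖ψ m‖ ^ 2)

/-- One step of the low-regularity integrator in Fourier coordinates:
`(Φ_τ z)_k = e^{-iβk²} (z_k + iλ ∑_{k+k₁=k₂+k₃, |kᵢ|≤N} c_{k₁} conj(z_{k₁}) z_{k₂} z_{k₃})`,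
where the convolution sum is parametrised by `(k₂,k₃)` with `k₁ = k₂ + k₃ - k`. -/
noncomputable def lriMap (N : ℕ∞) (β lam : ℝ) (c : ℤ → ℂ) (z : ℤ → ℂ) : ℤ → ℂ :=
  fun k => Complex.exp (-Complex.I * (k : ℂ) ^ 2 * β) *
    (z k + Complex.I * lam * ∑' p : ℤ × ℤ,
      if (k.natAbs : ℕ∞) ≤ N ∧ ((p.1 + p.2 - k).natAbs : ℕ∞) ≤ N ∧
          (p.1.natAbs : ℕ∞) ≤ N ∧ (p.2.natAbs : ℕ∞) ≤ N
      then c (p.1 + p.2 - k) * (starRingEnd ℂ) (z (p.1 + p.2 - k)) * z p.1 * z p.2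
      else 0)


open scoped ENNReal NNReal
open MeasureTheory

namespace LRI

noncomputable def vE (r : ℝ) (m : ℤ) : ℝ≥0∞ := ENNReal.ofReal (1 + ((m : ℝ) ^ 2) ^ r)

noncomputable def omE (m : ℤ) : ℝ≥0∞ := ENNReal.ofReal (1 + |(m : ℝ)|)

lemma vre_pos (r : ℝ) (m : ℤ) : 0 < 1 + ((m : ℝ) ^ 2) ^ r := by positivity

lemma one_le_vE (r : ℝ) (m : ℤ) : 1 ≤ vE r m := by
  rw [vE, ENNReal.one_le_ofReal]
  nlinarith [Real.rpow_nonneg (sq_nonneg (m:ℝ)) r]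

lemma vE_ne_zero (r : ℝ) (m : ℤ) : vE r m ≠ 0 := by
  have h := one_le_vE r m
  intro h0; rw [h0] at h; simp at h

lemma vE_ne_top (r : ℝ) (m : ℤ) : vE r m ≠ ⊤ := ENNReal.ofReal_ne_top

lemma omE_pos_real (m : ℤ) : (0:ℝ) < 1 + |(m:ℝ)| := by positivity

lemma one_le_omE (m : ℤ) : 1 ≤ omE m := by
  rw [omE, ENNReal.one_le_ofReal]; have := abs_nonneg (m:ℝ); linarith

lemma omE_ne_zero (m : ℤ) : omE m ≠ 0 :=
  ne_of_gt (lt_of_lt_of_le zero_lt_one (one_le_omE m))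

lemma omE_ne_top (m : ℤ) : omE m ≠ ⊤ := ENNReal.ofReal_ne_top

lemma omE_rpow (m : ℤ) (x : ℝ) : omE m ^ x = ENNReal.ofReal ((1 + |(m:ℝ)|) ^ x) :=
  ENNReal.ofReal_rpow_of_pos (omE_pos_real m)

lemma sq_rpow (r : ℝ) (m : ℤ) : (((m:ℝ)) ^ 2) ^ r = |(m:ℝ)| ^ (2*r) := by
  rw [← sq_abs, ← Real.rpow_natCast |(m:ℝ)| 2, ← Real.rpow_mul (abs_nonneg _)]
  norm_num

lemma wR_ge (r : ℝ) (hr : 0 ≤ r) (m : ℤ) :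
    1 + ((m:ℝ) ^ 2) ^ r ≤ 2 * (1 + |(m:ℝ)|) ^ (2*r) := by
  rw [sq_rpow]
  have h1 : (1:ℝ) ≤ (1 + |(m:ℝ)|) ^ (2*r) :=
    Real.one_le_rpow (by have := abs_nonneg (m:ℝ); linarith) (by linarith)
  have h2 : |(m:ℝ)| ^ (2*r) ≤ (1 + |(m:ℝ)|) ^ (2*r) :=
    Real.rpow_le_rpow (abs_nonneg _) (by linarith) (by linarith)
  linarith

lemma wR_le (r : ℝ) (hr : 0 ≤ r) (m : ℤ) :
    (1 + |(m:ℝ)|) ^ (2*r) ≤ 4 ^ r * (1 + ((m:ℝ) ^ 2) ^ r) := by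
  rw [sq_rpow]
  have h4 : (4:ℝ) ^ r = 2 ^ (2*r) := by
    rw [show (4:ℝ) = 2 ^ (2:ℕ) by norm_num, ← Real.rpow_natCast (2:ℝ) 2,
      ← Real.rpow_mul (by norm_num)]
    norm_num
  rcases le_total |(m:ℝ)| 1 with hm | hm
  · have : (1 + |(m:ℝ)|) ^ (2*r) ≤ 2 ^ (2*r) :=
      Real.rpow_le_rpow (by positivity) (by linarith) (by linarith)
    have h1 : (1:ℝ) ≤ 1 + |(m:ℝ)| ^ (2*r) := by
      have := Real.rpow_nonneg (abs_nonneg (m:ℝ)) (2*r); linarith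
    have hp : (0:ℝ) < 2 ^ (2*r) := by positivity
    calc (1 + |(m:ℝ)|) ^ (2*r) ≤ 2 ^ (2*r) * 1 := by linarith
    _ ≤ 2 ^ (2*r) * (1 + |(m:ℝ)| ^ (2*r)) := by nlinarith
    _ = 4 ^ r * (1 + |(m:ℝ)| ^ (2*r)) := by rw [h4]
  · have h0 : (1 + |(m:ℝ)|) ^ (2*r) ≤ (2 * |(m:ℝ)|) ^ (2*r) :=
      Real.rpow_le_rpow (by positivity) (by linarith) (by linarith)
    rw [Real.mul_rpow (by norm_num) (abs_nonneg _)] at h0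
    have hp : (0:ℝ) < 2 ^ (2*r) := by positivity
    calc (1 + |(m:ℝ)|) ^ (2*r) ≤ 2 ^ (2*r) * |(m:ℝ)| ^ (2*r) := h0
    _ ≤ 2 ^ (2*r) * (1 + |(m:ℝ)| ^ (2*r)) := by
        have := Real.rpow_nonneg (abs_nonneg (m:ℝ)) (2*r); nlinarith
    _ = 4 ^ r * (1 + |(m:ℝ)| ^ (2*r)) := by rw [h4]

lemma vE_le (r : ℝ) (hr : 0 ≤ r) (m : ℤ) : vE r m ≤ 2 * omE m ^ (2*r) := by
  rw [vE, omE_rpow, show (2:ℝ≥0∞) = ENNReal.ofReal 2 by norm_num,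
    ← ENNReal.ofReal_mul (by norm_num)]
  exact ENNReal.ofReal_le_ofReal (wR_ge r hr m)

lemma omE_le (r : ℝ) (hr : 0 ≤ r) (m : ℤ) :
    omE m ^ (2*r) ≤ ENNReal.ofReal (4 ^ r) * vE r m := by
  rw [vE, omE_rpow, ← ENNReal.ofReal_mul (by positivity)]
  exact ENNReal.ofReal_le_ofReal (wR_le r hr m)

lemma omE_tri {a b c d : ℤ} (h : a + b = c + d) : omE a ≤ omE b + omE c + omE d := by
  rw [omE, omE, omE, omE, ← ENNReal.ofReal_add (by positivity) (by positivity),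
    ← ENNReal.ofReal_add (by positivity) (by positivity)]
  apply ENNReal.ofReal_le_ofReal
  have hc : (a:ℝ) = (c:ℝ) + (d:ℝ) - (b:ℝ) := by
    have h' : (a:ℝ) + (b:ℝ) = (c:ℝ) + (d:ℝ) := by exact_mod_cast h
    linarith
  have : |(a:ℝ)| ≤ |(b:ℝ)| + |(c:ℝ)| + |(d:ℝ)| := by
    rw [hc]
    calc |(c:ℝ) + d - b| ≤ |(c:ℝ) + d| + |(b:ℝ)| := abs_sub _ _
    _ ≤ |(c:ℝ)| + |(d:ℝ)| + |(b:ℝ)| := by have := abs_add_le (c:ℝ) d; linarith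
    _ = _ := by ring
  linarith

lemma sq_sqrt' (x : ℝ≥0∞) : (x ^ (1/2:ℝ)) ^ (2:ℝ) = x := by
  rw [← ENNReal.rpow_mul]; norm_num

lemma sqrt_sq' (x : ℝ≥0∞) : (x ^ (2:ℝ)) ^ (1/2:ℝ) = x := by
  rw [← ENNReal.rpow_mul]; norm_num

lemma half_half (x : ℝ≥0∞) : x ^ (1/2:ℝ) * x ^ (1/2:ℝ) = x := by
  rw [← ENNReal.rpow_add_of_nonneg _ _ (by norm_num) (by norm_num)]; norm_num

lemma halfmul (x y : ℝ≥0∞) : x ^ (1/2:ℝ) * y ^ (1/2:ℝ) ≤ x + y := by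
  rcases le_total x y with hxy | hxy
  · calc x ^ (1/2:ℝ) * y ^ (1/2:ℝ)
        ≤ y ^ (1/2:ℝ) * y ^ (1/2:ℝ) :=
          mul_le_mul' (ENNReal.rpow_le_rpow hxy (by norm_num)) le_rfl
    _ = y := half_half y
    _ ≤ x + y := le_add_self
  · calc x ^ (1/2:ℝ) * y ^ (1/2:ℝ)
        ≤ x ^ (1/2:ℝ) * x ^ (1/2:ℝ) :=
          mul_le_mul' le_rfl (ENNReal.rpow_le_rpow hxy (by norm_num))
    _ = x := half_half x
    _ ≤ x + y := le_self_add

lemma tsum_shift (f : ℤ → ℝ≥0∞) (ε c : ℤ) (hε : ε = 1 ∨ ε = -1) :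
    ∑' k : ℤ, f (ε * k + c) = ∑' m, f m := by
  rcases hε with h | h <;> subst h
  · have : ∀ k : ℤ, (1 : ℤ) * k + c = k + c := fun k => by ring
    simp_rw [this]
    exact (Equiv.addRight c).tsum_eq f
  · have : ∀ k : ℤ, (-1 : ℤ) * k + c = c - k := fun k => by ring
    simp_rw [this]
    exact (Equiv.subLeft c).tsum_eq f

lemma tsum_CS {α : Type*} [Countable α] [MeasurableSpace α] [MeasurableSingletonClass α]
    (f g : α → ℝ≥0∞) :
    ∑' a, f a * g a ≤ (∑' a, f a ^ (2:ℝ)) ^ (1/2:ℝ) * (∑' a, g a ^ (2:ℝ)) ^ (1/2:ℝ) := by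
  have hpq : Real.HolderConjugate 2 2 := Real.HolderConjugate.two_two
  have h := ENNReal.lintegral_mul_le_Lp_mul_Lq (μ := Measure.count) hpq
    (measurable_of_countable f).aemeasurable (measurable_of_countable g).aemeasurable
  simpa [lintegral_count, one_div] using h

lemma tsum_mink (f g : ℤ → ℝ≥0∞) :
    (∑' k, (f k + g k) ^ (2:ℝ)) ^ (1/2:ℝ)
      ≤ (∑' k, f k ^ (2:ℝ)) ^ (1/2:ℝ) + (∑' k, g k ^ (2:ℝ)) ^ (1/2:ℝ) := by
  have h := ENNReal.lintegral_Lp_add_le (μ := Measure.count)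
    (measurable_of_countable f).aemeasurable (measurable_of_countable g).aemeasurable
    (by norm_num : (1:ℝ) ≤ 2)
  simpa [lintegral_count] using h

lemma tsum_prod_mul (g h : ℤ → ℝ≥0∞) :
    ∑' p : ℤ × ℤ, g p.1 * h p.2 = (∑' m, g m) * (∑' m, h m) := by
  rw [ENNReal.tsum_prod']
  simp_rw [ENNReal.tsum_mul_left]
  rw [ENNReal.tsum_mul_right]

lemma young (f g h : ℤ → ℝ≥0∞) (ε : ℤ) (hε : ε = 1 ∨ ε = -1) (δ : ℤ × ℤ → ℤ) :
    (∑' k : ℤ, (∑' p : ℤ × ℤ, f (ε * k + δ p) * (g p.1 * h p.2)) ^ (2:ℝ)) ^ (1/2:ℝ)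
      ≤ (∑' m, f m ^ (2:ℝ)) ^ (1/2:ℝ) * ((∑' m, g m) * (∑' m, h m)) := by
  set G : ℤ × ℤ → ℝ≥0∞ := fun p => g p.1 * h p.2 with hG
  have key : ∀ k : ℤ, (∑' p : ℤ × ℤ, f (ε * k + δ p) * G p) ^ (2:ℝ)
      ≤ (∑' p : ℤ × ℤ, f (ε * k + δ p) ^ (2:ℝ) * G p) * (∑' p, G p) := by
    intro k
    have split : (∑' p : ℤ × ℤ, f (ε * k + δ p) * G p)
        = ∑' p : ℤ × ℤ, (f (ε * k + δ p) * G p ^ (1/2:ℝ)) * G p ^ (1/2:ℝ) := by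
      refine tsum_congr fun p => ?_
      rw [mul_assoc, half_half]
    rw [split]
    calc (∑' p : ℤ × ℤ, (f (ε * k + δ p) * G p ^ (1/2:ℝ)) * G p ^ (1/2:ℝ)) ^ (2:ℝ)
        ≤ ((∑' p : ℤ × ℤ, (f (ε * k + δ p) * G p ^ (1/2:ℝ)) ^ (2:ℝ)) ^ (1/2:ℝ)
            * (∑' p : ℤ × ℤ, (G p ^ (1/2:ℝ)) ^ (2:ℝ)) ^ (1/2:ℝ)) ^ (2:ℝ) :=
          ENNReal.rpow_le_rpow (tsum_CS _ _) (by norm_num)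
      _ = (∑' p : ℤ × ℤ, f (ε * k + δ p) ^ (2:ℝ) * G p) * (∑' p, G p) := by
          rw [ENNReal.mul_rpow_of_nonneg _ _ (by norm_num : (0:ℝ) ≤ 2), sq_sqrt', sq_sqrt']
          congr 1
          · refine tsum_congr fun p => ?_
            rw [ENNReal.mul_rpow_of_nonneg _ _ (by norm_num : (0:ℝ) ≤ 2), sq_sqrt']
          · exact tsum_congr fun p => sq_sqrt' _
  have sum2 : ∑' k : ℤ, (∑' p : ℤ × ℤ, f (ε * k + δ p) * G p) ^ (2:ℝ)
      ≤ (∑' m, f m ^ (2:ℝ)) * (∑' p, G p) * (∑' p, G p) := by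
    calc ∑' k : ℤ, (∑' p : ℤ × ℤ, f (ε * k + δ p) * G p) ^ (2:ℝ)
        ≤ ∑' k : ℤ, (∑' p : ℤ × ℤ, f (ε * k + δ p) ^ (2:ℝ) * G p) * (∑' p, G p) :=
          ENNReal.tsum_le_tsum fun k => key k
      _ = (∑' k : ℤ, ∑' p : ℤ × ℤ, f (ε * k + δ p) ^ (2:ℝ) * G p) * (∑' p, G p) :=
          ENNReal.tsum_mul_right
      _ = (∑' p : ℤ × ℤ, ∑' k : ℤ, f (ε * k + δ p) ^ (2:ℝ) * G p) * (∑' p, G p) := by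
          rw [ENNReal.tsum_comm]
      _ = (∑' p : ℤ × ℤ, (∑' m, f m ^ (2:ℝ)) * G p) * (∑' p, G p) := by
          congr 1
          refine tsum_congr fun p => ?_
          rw [ENNReal.tsum_mul_right, tsum_shift (fun m => f m ^ (2:ℝ)) ε (δ p) hε]
      _ = (∑' m, f m ^ (2:ℝ)) * (∑' p, G p) * (∑' p, G p) := by
          rw [ENNReal.tsum_mul_left]
  calc (∑' k : ℤ, (∑' p : ℤ × ℤ, f (ε * k + δ p) * G p) ^ (2:ℝ)) ^ (1/2:ℝ)
      ≤ ((∑' m, f m ^ (2:ℝ)) * (∑' p, G p) * (∑' p, G p)) ^ (1/2:ℝ) :=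
        ENNReal.rpow_le_rpow sum2 (by norm_num)
    _ = (∑' m, f m ^ (2:ℝ)) ^ (1/2:ℝ) * ((∑' p, G p) ^ (1/2:ℝ) * (∑' p, G p) ^ (1/2:ℝ)) := by
        rw [ENNReal.mul_rpow_of_nonneg _ _ (by norm_num : (0:ℝ) ≤ 1/2),
          ENNReal.mul_rpow_of_nonneg _ _ (by norm_num : (0:ℝ) ≤ 1/2), mul_assoc]
    _ = (∑' m, f m ^ (2:ℝ)) ^ (1/2:ℝ) * (∑' p, G p) := by rw [half_half]
    _ = (∑' m, f m ^ (2:ℝ)) ^ (1/2:ℝ) * ((∑' m, g m) * (∑' m, h m)) := by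
        rw [hG, tsum_prod_mul]

-- ## kappa sums and summability

noncomputable def kk1 (r : ℝ) : ℝ≥0∞ := ∑' m : ℤ, (vE r m)⁻¹

noncomputable def kk2 (s γ : ℝ) : ℝ≥0∞ := ∑' m : ℤ, omE m ^ (-(2*γ)) * (vE s m)⁻¹

lemma summable_aux (t : ℝ) (ht : 1/2 < t) :
    Summable (fun m : ℤ => |(m:ℝ)| ^ (-(2*t)) + if m = 0 then (1:ℝ) else 0) := by
  refine (Real.summable_abs_int_rpow (by linarith)).add ?_
  refine summable_of_ne_finset_zero (s := ({0} : Finset ℤ)) ?_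
  intro m hm
  simp only [Finset.mem_singleton] at hm
  simp [hm]

lemma one_le_abs_real {m : ℤ} (hm : m ≠ 0) : (1:ℝ) ≤ |(m:ℝ)| := by
  rw [← Int.cast_abs]
  exact_mod_cast Int.one_le_abs hm

lemma ompow_le_aux (t : ℝ) (ht : 0 < t) (m : ℤ) :
    (1 + |(m:ℝ)|) ^ (-(2*t)) ≤ |(m:ℝ)| ^ (-(2*t)) + if m = 0 then (1:ℝ) else 0 := by
  rcases eq_or_ne m 0 with hm | hm
  · subst hm
    rw [if_pos rfl]
    have h1 : (1 + |((0:ℤ):ℝ)|) ^ (-(2*t)) = 1 := by norm_num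
    rw [h1]
    have := Real.rpow_nonneg (abs_nonneg (((0:ℤ)):ℝ)) (-(2*t))
    linarith
  · rw [if_neg hm, add_zero]
    have h1 := one_le_abs_real hm
    exact Real.rpow_le_rpow_of_nonpos (by linarith) (by linarith) (by linarith)

lemma inv_le_aux {a B c : ℝ} (ha : 0 < a) (hB : 0 < B) (h : B ≤ c * a) :
    a⁻¹ ≤ c * B⁻¹ := by
  rw [← div_eq_mul_inv, le_div_iff₀ hB]
  calc a⁻¹ * B ≤ a⁻¹ * (c * a) := by
        apply mul_le_mul_of_nonneg_left h (by positivity)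
  _ = c := by field_simp

lemma real_summable_inv_v (r : ℝ) (hr2 : 1/2 < r) (hr : 0 ≤ r) :
    Summable (fun m : ℤ => (1 + ((m:ℝ) ^ 2) ^ r)⁻¹) := by
  refine Summable.of_nonneg_of_le (fun m => by positivity)
    (fun m => ?_) (summable_aux r hr2)
  rcases eq_or_ne m 0 with hm | hm
  · subst hm
    rw [if_pos rfl]
    simp only [Int.cast_zero, abs_zero]
    rw [show ((0:ℝ)^2) = 0 by norm_num, Real.zero_rpow (by intro h0; linarith),
      Real.zero_rpow (by intro h0; linarith)]
    norm_num
  · rw [if_neg hm, add_zero]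
    have h1 := one_le_abs_real hm
    have hsq : ((m:ℝ)^2) ^ r = |(m:ℝ)| ^ (2*r) := sq_rpow r m
    have hpos : (0:ℝ) < |(m:ℝ)| ^ (2*r) := Real.rpow_pos_of_pos (by linarith) _
    rw [Real.rpow_neg (abs_nonneg _)]
    rw [hsq]
    exact inv_anti₀ hpos (by linarith)

lemma kk1_ne_top (r : ℝ) (hr2 : 1/2 < r) (hr : 0 ≤ r) : kk1 r ≠ ⊤ := by
  have heq : kk1 r = ENNReal.ofReal (∑' m : ℤ, (1 + ((m:ℝ) ^ 2) ^ r)⁻¹) := by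
    rw [kk1, ENNReal.ofReal_tsum_of_nonneg (fun m => by positivity)
      (real_summable_inv_v r hr2 hr)]
    refine tsum_congr fun m => ?_
    rw [vE, ← ENNReal.ofReal_inv_of_pos (vre_pos r m)]
  rw [heq]; exact ENNReal.ofReal_ne_top

lemma real_summable_kk2 (s γ : ℝ) (hs : 0 ≤ s) (hγ : 0 ≤ γ) (hsγ : 1/2 < s + γ) :
    Summable (fun m : ℤ => (1 + |(m:ℝ)|) ^ (-(2*γ)) * (1 + ((m:ℝ) ^ 2) ^ s)⁻¹) := by
  have hsum := (summable_aux (s+γ) hsγ).mul_left ((4:ℝ) ^ s)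
  refine Summable.of_nonneg_of_le (fun m => by positivity) (fun m => ?_) hsum
  have hb : (0:ℝ) < 1 + |(m:ℝ)| := omE_pos_real m
  have h1 : (1 + ((m:ℝ)^2) ^ s)⁻¹ ≤ 4 ^ s * ((1 + |(m:ℝ)|) ^ (2*s))⁻¹ :=
    inv_le_aux (vre_pos s m) (Real.rpow_pos_of_pos hb _) (wR_le s hs m)
  calc (1 + |(m:ℝ)|) ^ (-(2*γ)) * (1 + ((m:ℝ)^2) ^ s)⁻¹
      ≤ (1 + |(m:ℝ)|) ^ (-(2*γ)) * (4 ^ s * ((1 + |(m:ℝ)|) ^ (2*s))⁻¹) := by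
        apply mul_le_mul_of_nonneg_left h1 (Real.rpow_nonneg (by linarith) _)
  _ = 4 ^ s * ((1 + |(m:ℝ)|) ^ (-(2*γ)) * ((1 + |(m:ℝ)|) ^ (2*s))⁻¹) := by ring
  _ = 4 ^ s * ((1 + |(m:ℝ)|) ^ (-(2*γ)) * (1 + |(m:ℝ)|) ^ (-(2*s))) := by
        rw [← Real.rpow_neg (le_of_lt hb) (2*s)]
  _ = 4 ^ s * ((1 + |(m:ℝ)|) ^ (-(2*(s+γ)))) := by
        rw [← Real.rpow_add hb]
        congr 1
        ring
  _ ≤ 4 ^ s * (|(m:ℝ)| ^ (-(2*(s+γ))) + if m = 0 then (1:ℝ) else 0) := by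
        apply mul_le_mul_of_nonneg_left (ompow_le_aux (s+γ) (by linarith) m) (by positivity)

lemma kk2_ne_top (s γ : ℝ) (hs : 0 ≤ s) (hγ : 0 ≤ γ) (hsγ : 1/2 < s + γ) :
    kk2 s γ ≠ ⊤ := by
  have heq : kk2 s γ
      = ENNReal.ofReal (∑' m : ℤ, (1 + |(m:ℝ)|) ^ (-(2*γ)) * (1 + ((m:ℝ) ^ 2) ^ s)⁻¹) := by
    rw [kk2, ENNReal.ofReal_tsum_of_nonneg (fun m => by positivity)
      (real_summable_kk2 s γ hs hγ hsγ)]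
    refine tsum_congr fun m => ?_
    rw [ENNReal.ofReal_mul (Real.rpow_nonneg (le_of_lt (omE_pos_real m)) _), omE_rpow,
      vE, ← ENNReal.ofReal_inv_of_pos (vre_pos s m)]
  rw [heq]; exact ENNReal.ofReal_ne_top

-- ## ℓ¹ and ℓ² bounds

lemma l1_bound (r : ℝ) (φ : ℤ → ℝ≥0∞) :
    ∑' m, φ m ≤ (kk1 r) ^ (1/2:ℝ) * (∑' m, vE r m * φ m ^ (2:ℝ)) ^ (1/2:ℝ) := by
  have split : ∀ m : ℤ, φ m = ((vE r m)⁻¹) ^ (1/2:ℝ) * ((vE r m) ^ (1/2:ℝ) * φ m) := by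
    intro m
    rw [← mul_assoc, ← ENNReal.mul_rpow_of_nonneg _ _ (by norm_num : (0:ℝ) ≤ 1/2),
      ENNReal.inv_mul_cancel (vE_ne_zero r m) (vE_ne_top r m), ENNReal.one_rpow, one_mul]
  calc ∑' m, φ m = ∑' m, ((vE r m)⁻¹) ^ (1/2:ℝ) * ((vE r m) ^ (1/2:ℝ) * φ m) :=
        tsum_congr split
  _ ≤ (∑' m, (((vE r m)⁻¹) ^ (1/2:ℝ)) ^ (2:ℝ)) ^ (1/2:ℝ)
      * (∑' m, ((vE r m) ^ (1/2:ℝ) * φ m) ^ (2:ℝ)) ^ (1/2:ℝ) := tsum_CS _ _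
  _ = (kk1 r) ^ (1/2:ℝ) * (∑' m, vE r m * φ m ^ (2:ℝ)) ^ (1/2:ℝ) := by
      congr 2
      · exact tsum_congr fun m => sq_sqrt' _
      · refine tsum_congr fun m => ?_
        rw [ENNReal.mul_rpow_of_nonneg _ _ (by norm_num : (0:ℝ) ≤ 2), sq_sqrt']

lemma l1w_bound (s γ : ℝ) (φ : ℤ → ℝ≥0∞) :
    ∑' m, omE m ^ (-γ) * φ m
      ≤ (kk2 s γ) ^ (1/2:ℝ) * (∑' m, vE s m * φ m ^ (2:ℝ)) ^ (1/2:ℝ) := by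
  have split : ∀ m : ℤ, omE m ^ (-γ) * φ m
      = (omE m ^ (-(2*γ)) * (vE s m)⁻¹) ^ (1/2:ℝ) * ((vE s m) ^ (1/2:ℝ) * φ m) := by
    intro m
    rw [ENNReal.mul_rpow_of_nonneg _ _ (by norm_num : (0:ℝ) ≤ 1/2)]
    rw [← ENNReal.rpow_mul (omE m)]
    have he : -(2*γ) * (1/2) = -γ := by ring
    rw [he]
    rw [mul_assoc, ← mul_assoc (((vE s m)⁻¹) ^ (1/2:ℝ)),
      ← ENNReal.mul_rpow_of_nonneg _ _ (by norm_num : (0:ℝ) ≤ 1/2),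
      ENNReal.inv_mul_cancel (vE_ne_zero s m) (vE_ne_top s m), ENNReal.one_rpow, one_mul]
  calc ∑' m, omE m ^ (-γ) * φ m
      = ∑' m, (omE m ^ (-(2*γ)) * (vE s m)⁻¹) ^ (1/2:ℝ) * ((vE s m) ^ (1/2:ℝ) * φ m) :=
        tsum_congr split
  _ ≤ (∑' m, ((omE m ^ (-(2*γ)) * (vE s m)⁻¹) ^ (1/2:ℝ)) ^ (2:ℝ)) ^ (1/2:ℝ)
      * (∑' m, ((vE s m) ^ (1/2:ℝ) * φ m) ^ (2:ℝ)) ^ (1/2:ℝ) := tsum_CS _ _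
  _ = (kk2 s γ) ^ (1/2:ℝ) * (∑' m, vE s m * φ m ^ (2:ℝ)) ^ (1/2:ℝ) := by
      congr 2
      · exact tsum_congr fun m => sq_sqrt' _
      · refine tsum_congr fun m => ?_
        rw [ENNReal.mul_rpow_of_nonneg _ _ (by norm_num : (0:ℝ) ≤ 2), sq_sqrt']

lemma l2_bound (r : ℝ) (hr : 0 ≤ r) (φ : ℤ → ℝ≥0∞) :
    ∑' m, (omE m ^ r * φ m) ^ (2:ℝ)
      ≤ ENNReal.ofReal (4 ^ r) * ∑' m, vE r m * φ m ^ (2:ℝ) := by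
  rw [← ENNReal.tsum_mul_left]
  refine ENNReal.tsum_le_tsum fun m => ?_
  rw [ENNReal.mul_rpow_of_nonneg _ _ (by norm_num : (0:ℝ) ≤ 2)]
  have h1 : (omE m ^ r) ^ (2:ℝ) = omE m ^ (2*r) := by
    rw [← ENNReal.rpow_mul]; ring_nf
  rw [h1, ← mul_assoc]
  exact mul_le_mul' (omE_le r hr m) le_rfl

-- ## the convolution and Young-type bounds

noncomputable def conv3 (A B C : ℤ → ℝ≥0∞) : ℤ → ℝ≥0∞ :=
  fun k => ∑' p : ℤ × ℤ, A (p.1 + p.2 - k) * B p.1 * C p.2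

lemma conv3_swap (A B C : ℤ → ℝ≥0∞) : conv3 A B C = conv3 A C B := by
  funext k
  rw [conv3, conv3]
  have key := (Equiv.prodComm ℤ ℤ).tsum_eq
    (fun q : ℤ × ℤ => A (q.1 + q.2 - k) * C q.1 * B q.2)
  rw [← key]
  refine tsum_congr fun p => ?_
  show A (p.1 + p.2 - k) * B p.1 * C p.2
      = A (p.2 + p.1 - k) * C p.2 * B p.1
  rw [add_comm p.2 p.1]
  ring

lemma Y1 (A B C : ℤ → ℝ≥0∞) :
    (∑' k, conv3 A B C k ^ (2:ℝ)) ^ (1/2:ℝ)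
      ≤ (∑' m, A m ^ (2:ℝ)) ^ (1/2:ℝ) * ((∑' m, B m) * (∑' m, C m)) := by
  have h := young A B C (-1) (Or.inr rfl) (fun p => p.1 + p.2)
  have he : ∀ k, conv3 A B C k = ∑' p : ℤ × ℤ, A (-1 * k + (p.1 + p.2)) * (B p.1 * C p.2) := by
    intro k
    refine tsum_congr fun p => ?_
    have : -1 * k + (p.1 + p.2) = p.1 + p.2 - k := by ring
    rw [this, mul_assoc]
  simp_rw [he]
  exact h

lemma Y2 (A B C : ℤ → ℝ≥0∞) :
    (∑' k, conv3 A B C k ^ (2:ℝ)) ^ (1/2:ℝ)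
      ≤ (∑' m, B m ^ (2:ℝ)) ^ (1/2:ℝ) * ((∑' m, A m) * (∑' m, C m)) := by
  have h := young B A C 1 (Or.inl rfl) (fun q => q.1 - q.2)
  have he : ∀ k, conv3 A B C k = ∑' q : ℤ × ℤ, B (1 * k + (q.1 - q.2)) * (A q.1 * C q.2) := by
    intro k
    rw [conv3]
    have key := (⟨fun q : ℤ × ℤ => (q.1 - q.2 + k, q.2), fun p => (p.1 + p.2 - k, p.2),
        fun q => by obtain ⟨a, b⟩ := q; simp; ring,
        fun p => by obtain ⟨a, b⟩ := p; simp; ring⟩ :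
        ℤ × ℤ ≃ ℤ × ℤ).tsum_eq (fun p : ℤ × ℤ => A (p.1 + p.2 - k) * B p.1 * C p.2)
    rw [← key]
    refine tsum_congr fun q => ?_
    show A ((q.1 - q.2 + k) + q.2 - k) * B (q.1 - q.2 + k) * C q.2 = _
    have h1 : (q.1 - q.2 + k) + q.2 - k = q.1 := by ring
    have h2 : q.1 - q.2 + k = 1 * k + (q.1 - q.2) := by ring
    rw [h1, h2]
    ring
  simp_rw [he]
  exact h

lemma Y3 (A B C : ℤ → ℝ≥0∞) :
    (∑' k, conv3 A B C k ^ (2:ℝ)) ^ (1/2:ℝ)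
      ≤ (∑' m, C m ^ (2:ℝ)) ^ (1/2:ℝ) * ((∑' m, A m) * (∑' m, B m)) := by
  rw [conv3_swap]
  exact Y2 A C B

-- ## weight distribution

lemma distrib (s γ : ℝ) (hs : 0 ≤ s) (hγ : 0 ≤ γ) (n n1 n2 n3 : ℝ≥0∞)
    (h1 : 1 ≤ n1) (h2 : 1 ≤ n2) (h3 : 1 ≤ n3)
    (t1 : n1 ≠ ⊤) (t2 : n2 ≠ ⊤) (t3 : n3 ≠ ⊤)
    (h : n ≤ n1 + n2 + n3) :
    n ^ s ≤ ENNReal.ofReal (3 ^ s)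
      * (n1 ^ s + n1 ^ (-γ) * n2 ^ (s+γ) + n1 ^ (-γ) * n3 ^ (s+γ)) := by
  have h3s : (ENNReal.ofReal (3 ^ s) : ℝ≥0∞) = (3:ℝ≥0∞) ^ s := by
    rw [show (3:ℝ≥0∞) = ENNReal.ofReal 3 by norm_num, ENNReal.ofReal_rpow_of_pos (by norm_num)]
  rw [h3s]
  have trade : ∀ a b : ℝ≥0∞, 1 ≤ a → a ≠ ⊤ → a ≤ b → b ≠ ⊤ → b ^ s ≤ a ^ (-γ) * b ^ (s+γ) := by
    intro a b ha hat hab hbt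
    have hb0 : b ≠ 0 := by
      intro hb; rw [hb] at hab; exact absurd (le_antisymm (hab.trans (le_refl 0)) (zero_le : (0:ℝ≥0∞) ≤ a)) (by
        intro hh; rw [hh] at ha; simp at ha)
    have hkey : b ^ s = b ^ (-γ) * b ^ (s+γ) := by
      rw [← ENNReal.rpow_add _ _ hb0 hbt]; ring_nf
    rw [hkey]
    refine mul_le_mul' ?_ le_rfl
    rw [ENNReal.rpow_neg, ENNReal.rpow_neg]
    exact ENNReal.inv_le_inv.mpr (ENNReal.rpow_le_rpow hab hγ)
  have main : ∀ nj : ℝ≥0∞, n ≤ 3 * nj →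
      nj ^ s ≤ n1 ^ s + n1 ^ (-γ) * n2 ^ (s+γ) + n1 ^ (-γ) * n3 ^ (s+γ) → n ^ s ≤ (3:ℝ≥0∞) ^ s
      * (n1 ^ s + n1 ^ (-γ) * n2 ^ (s+γ) + n1 ^ (-γ) * n3 ^ (s+γ)) := by
    intro nj hn hj
    calc n ^ s ≤ (3 * nj) ^ s := ENNReal.rpow_le_rpow hn hs
    _ = (3:ℝ≥0∞) ^ s * nj ^ s := ENNReal.mul_rpow_of_nonneg _ _ hs
    _ ≤ _ := mul_le_mul' le_rfl hj
  rcases le_total n2 n1 with h21 | h21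
  · rcases le_total n3 n1 with h31 | h31
    · refine main n1 (by calc n ≤ n1 + n2 + n3 := h
        _ ≤ n1 + n1 + n1 := add_le_add (add_le_add le_rfl h21) h31
        _ = 3 * n1 := by ring) ?_
      calc n1 ^ s ≤ n1 ^ s + n1 ^ (-γ) * n2 ^ (s+γ) := le_self_add
      _ ≤ _ := le_self_add
    · refine main n3 (by calc n ≤ n1 + n2 + n3 := h
        _ ≤ n3 + n3 + n3 := add_le_add (add_le_add h31 (h21.trans h31)) le_rfl
        _ = 3 * n3 := by ring) ?_
      exact le_add_left (trade n1 n3 h1 t1 h31 t3)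
  · rcases le_total n3 n2 with h32 | h32
    · refine main n2 (by calc n ≤ n1 + n2 + n3 := h
        _ ≤ n2 + n2 + n2 := add_le_add (add_le_add h21 le_rfl) h32
        _ = 3 * n2 := by ring) ?_
      calc n2 ^ s ≤ n1 ^ (-γ) * n2 ^ (s+γ) := trade n1 n2 h1 t1 h21 t2
      _ ≤ _ := le_add_right (le_add_left le_rfl)
    · refine main n3 (by calc n ≤ n1 + n2 + n3 := h
        _ ≤ n3 + n3 + n3 := add_le_add (add_le_add (h21.trans h32) h32) le_rfl
        _ = 3 * n3 := by ring) ?_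
      exact le_add_left (trade n1 n3 h1 t1 (h21.trans h32) t3)

-- ## norms and constants

noncomputable def N2 (r : ℝ) (F : ℤ → ℝ≥0∞) : ℝ≥0∞ := ∑' m, vE r m * F m ^ (2:ℝ)

noncomputable def c0 (s γ : ℝ) : ℝ≥0∞ :=
  (ENNReal.ofReal (4 ^ (s+γ))) ^ (1/2:ℝ) * (kk1 (s+γ) + kk2 s γ + 1)

noncomputable def Ktri (s γ : ℝ) : ℝ≥0∞ :=
  (2:ℝ≥0∞) ^ (1/2:ℝ) * ENNReal.ofReal (3 ^ s) * 3 * c0 s γ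

lemma c0_ne_top (s γ : ℝ) (hs : 0 ≤ s) (hγ : 0 ≤ γ) (hsγ : 1/2 < s + γ) : c0 s γ ≠ ⊤ := by
  rw [c0]
  apply ENNReal.mul_ne_top
  · exact ENNReal.rpow_ne_top_of_nonneg (by norm_num) ENNReal.ofReal_ne_top
  · exact ENNReal.add_ne_top.mpr ⟨ENNReal.add_ne_top.mpr
      ⟨kk1_ne_top (s+γ) hsγ (by linarith), kk2_ne_top s γ hs hγ hsγ⟩, ENNReal.one_ne_top⟩

lemma Ktri_ne_top (s γ : ℝ) (hs : 0 ≤ s) (hγ : 0 ≤ γ) (hsγ : 1/2 < s + γ) :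
    Ktri s γ ≠ ⊤ := by
  rw [Ktri]
  apply ENNReal.mul_ne_top
  apply ENNReal.mul_ne_top
  apply ENNReal.mul_ne_top
  · exact ENNReal.rpow_ne_top_of_nonneg (by norm_num) (by norm_num)
  · exact ENNReal.ofReal_ne_top
  · norm_num
  · exact c0_ne_top s γ hs hγ hsγ

lemma patA (s γ : ℝ) (hs : 0 ≤ s) (hγ : 0 ≤ γ) (F G H : ℤ → ℝ≥0∞) :
    (∑' m, (omE m ^ s * F m) ^ (2:ℝ)) ^ (1/2:ℝ) * ((∑' m, G m) * (∑' m, H m))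
      ≤ c0 s γ * ((N2 s F) ^ (1/2:ℝ) * ((N2 (s+γ) G) ^ (1/2:ℝ) * (N2 (s+γ) H) ^ (1/2:ℝ))) := by
  have hF : (∑' m, (omE m ^ s * F m) ^ (2:ℝ)) ^ (1/2:ℝ)
      ≤ (ENNReal.ofReal (4 ^ s)) ^ (1/2:ℝ) * (N2 s F) ^ (1/2:ℝ) := by
    calc (∑' m, (omE m ^ s * F m) ^ (2:ℝ)) ^ (1/2:ℝ)
        ≤ (ENNReal.ofReal (4 ^ s) * N2 s F) ^ (1/2:ℝ) :=
          ENNReal.rpow_le_rpow (l2_bound s hs F) (by norm_num)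
    _ = _ := ENNReal.mul_rpow_of_nonneg _ _ (by norm_num)
  have hG := l1_bound (s+γ) G
  have hH := l1_bound (s+γ) H
  calc (∑' m, (omE m ^ s * F m) ^ (2:ℝ)) ^ (1/2:ℝ) * ((∑' m, G m) * (∑' m, H m))
      ≤ ((ENNReal.ofReal (4 ^ s)) ^ (1/2:ℝ) * (N2 s F) ^ (1/2:ℝ))
        * ((kk1 (s+γ) ^ (1/2:ℝ) * (N2 (s+γ) G) ^ (1/2:ℝ))
           * (kk1 (s+γ) ^ (1/2:ℝ) * (N2 (s+γ) H) ^ (1/2:ℝ))) :=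
        mul_le_mul' hF (mul_le_mul' hG hH)
  _ = ((ENNReal.ofReal (4 ^ s)) ^ (1/2:ℝ) * (kk1 (s+γ) ^ (1/2:ℝ) * kk1 (s+γ) ^ (1/2:ℝ)))
      * ((N2 s F) ^ (1/2:ℝ) * ((N2 (s+γ) G) ^ (1/2:ℝ) * (N2 (s+γ) H) ^ (1/2:ℝ))) := by
      ring
  _ ≤ c0 s γ * ((N2 s F) ^ (1/2:ℝ) * ((N2 (s+γ) G) ^ (1/2:ℝ) * (N2 (s+γ) H) ^ (1/2:ℝ))) := by
      refine mul_le_mul' ?_ le_rfl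
      rw [c0]
      refine mul_le_mul' ?_ ?_
      · refine ENNReal.rpow_le_rpow ?_ (by norm_num)
        exact ENNReal.ofReal_le_ofReal
          (Real.rpow_le_rpow_of_exponent_le (by norm_num) (by linarith))
      · rw [half_half]
        exact le_add_right le_self_add

lemma patB (s γ : ℝ) (hs : 0 ≤ s) (hγ : 0 ≤ γ) (F G H : ℤ → ℝ≥0∞) :
    (∑' m, (omE m ^ (s+γ) * G m) ^ (2:ℝ)) ^ (1/2:ℝ)
      * ((∑' m, omE m ^ (-γ) * F m) * (∑' m, H m))
      ≤ c0 s γ * ((N2 s F) ^ (1/2:ℝ) * ((N2 (s+γ) G) ^ (1/2:ℝ) * (N2 (s+γ) H) ^ (1/2:ℝ))) := by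
  have hG : (∑' m, (omE m ^ (s+γ) * G m) ^ (2:ℝ)) ^ (1/2:ℝ)
      ≤ (ENNReal.ofReal (4 ^ (s+γ))) ^ (1/2:ℝ) * (N2 (s+γ) G) ^ (1/2:ℝ) := by
    calc (∑' m, (omE m ^ (s+γ) * G m) ^ (2:ℝ)) ^ (1/2:ℝ)
        ≤ (ENNReal.ofReal (4 ^ (s+γ)) * N2 (s+γ) G) ^ (1/2:ℝ) :=
          ENNReal.rpow_le_rpow (l2_bound (s+γ) (by linarith) G) (by norm_num)
    _ = _ := ENNReal.mul_rpow_of_nonneg _ _ (by norm_num)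
  have hF := l1w_bound s γ F
  have hH := l1_bound (s+γ) H
  calc (∑' m, (omE m ^ (s+γ) * G m) ^ (2:ℝ)) ^ (1/2:ℝ)
      * ((∑' m, omE m ^ (-γ) * F m) * (∑' m, H m))
      ≤ ((ENNReal.ofReal (4 ^ (s+γ))) ^ (1/2:ℝ) * (N2 (s+γ) G) ^ (1/2:ℝ))
        * ((kk2 s γ ^ (1/2:ℝ) * (N2 s F) ^ (1/2:ℝ))
           * (kk1 (s+γ) ^ (1/2:ℝ) * (N2 (s+γ) H) ^ (1/2:ℝ))) :=
        mul_le_mul' hG (mul_le_mul' hF hH)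
  _ = ((ENNReal.ofReal (4 ^ (s+γ))) ^ (1/2:ℝ) * (kk2 s γ ^ (1/2:ℝ) * kk1 (s+γ) ^ (1/2:ℝ)))
      * ((N2 s F) ^ (1/2:ℝ) * ((N2 (s+γ) G) ^ (1/2:ℝ) * (N2 (s+γ) H) ^ (1/2:ℝ))) := by
      ring
  _ ≤ c0 s γ * ((N2 s F) ^ (1/2:ℝ) * ((N2 (s+γ) G) ^ (1/2:ℝ) * (N2 (s+γ) H) ^ (1/2:ℝ))) := by
      refine mul_le_mul' ?_ le_rfl
      rw [c0]
      refine mul_le_mul' le_rfl ?_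
      calc kk2 s γ ^ (1/2:ℝ) * kk1 (s+γ) ^ (1/2:ℝ) ≤ kk2 s γ + kk1 (s+γ) := halfmul _ _
      _ ≤ kk1 (s+γ) + kk2 s γ + 1 := by
          rw [add_comm (kk2 s γ)]
          exact le_add_right le_rfl

lemma tsum_mink3 (T1 T2 T3 : ℤ → ℝ≥0∞) :
    (∑' k, (T1 k + T2 k + T3 k) ^ (2:ℝ)) ^ (1/2:ℝ)
      ≤ (∑' k, T1 k ^ (2:ℝ)) ^ (1/2:ℝ) + (∑' k, T2 k ^ (2:ℝ)) ^ (1/2:ℝ)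
        + (∑' k, T3 k ^ (2:ℝ)) ^ (1/2:ℝ) := by
  have h1 := tsum_mink (fun k => T1 k + T2 k) T3
  have h2 := tsum_mink T1 T2
  calc (∑' k, (T1 k + T2 k + T3 k) ^ (2:ℝ)) ^ (1/2:ℝ)
      ≤ (∑' k, (T1 k + T2 k) ^ (2:ℝ)) ^ (1/2:ℝ) + (∑' k, T3 k ^ (2:ℝ)) ^ (1/2:ℝ) := h1
  _ ≤ ((∑' k, T1 k ^ (2:ℝ)) ^ (1/2:ℝ) + (∑' k, T2 k ^ (2:ℝ)) ^ (1/2:ℝ))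
        + (∑' k, T3 k ^ (2:ℝ)) ^ (1/2:ℝ) := add_le_add h2 le_rfl
  _ = _ := by ring

lemma step_ab (s : ℝ) (hs : 0 ≤ s) (cv T1 T2 T3 : ℤ → ℝ≥0∞)
    (hpt : ∀ k, omE k ^ s * cv k ≤ ENNReal.ofReal (3 ^ s) * (T1 k + T2 k + T3 k)) :
    (∑' k, vE s k * cv k ^ (2:ℝ)) ^ (1/2:ℝ)
      ≤ (2:ℝ≥0∞) ^ (1/2:ℝ) * ENNReal.ofReal (3 ^ s)
        * ((∑' k, T1 k ^ (2:ℝ)) ^ (1/2:ℝ) + (∑' k, T2 k ^ (2:ℝ)) ^ (1/2:ℝ)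
          + (∑' k, T3 k ^ (2:ℝ)) ^ (1/2:ℝ)) := by
  have stepa : ∀ k, vE s k * cv k ^ (2:ℝ) ≤ 2 * (omE k ^ s * cv k) ^ (2:ℝ) := by
    intro k
    rw [ENNReal.mul_rpow_of_nonneg _ _ (by norm_num : (0:ℝ) ≤ 2)]
    have h1 : (omE k ^ s) ^ (2:ℝ) = omE k ^ (2*s) := by
      rw [← ENNReal.rpow_mul]; ring_nf
    rw [h1, ← mul_assoc]
    exact mul_le_mul' (vE_le s hs k) le_rfl
  have stepb : ∀ k, (omE k ^ s * cv k) ^ (2:ℝ)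
      ≤ ENNReal.ofReal (3 ^ s) ^ (2:ℝ) * ((T1 k + T2 k + T3 k) ^ (2:ℝ)) := by
    intro k
    rw [← ENNReal.mul_rpow_of_nonneg _ _ (by norm_num : (0:ℝ) ≤ 2)]
    exact ENNReal.rpow_le_rpow (hpt k) (by norm_num)
  calc (∑' k, vE s k * cv k ^ (2:ℝ)) ^ (1/2:ℝ)
      ≤ (∑' k, 2 * (omE k ^ s * cv k) ^ (2:ℝ)) ^ (1/2:ℝ) :=
        ENNReal.rpow_le_rpow (ENNReal.tsum_le_tsum stepa) (by norm_num)
  _ = (2:ℝ≥0∞) ^ (1/2:ℝ) * (∑' k, (omE k ^ s * cv k) ^ (2:ℝ)) ^ (1/2:ℝ) := by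
      rw [ENNReal.tsum_mul_left, ENNReal.mul_rpow_of_nonneg _ _ (by norm_num : (0:ℝ) ≤ 1/2)]
  _ ≤ (2:ℝ≥0∞) ^ (1/2:ℝ)
      * (∑' k, ENNReal.ofReal (3 ^ s) ^ (2:ℝ) * ((T1 k + T2 k + T3 k) ^ (2:ℝ))) ^ (1/2:ℝ) := by
      exact mul_le_mul' le_rfl
        (ENNReal.rpow_le_rpow (ENNReal.tsum_le_tsum stepb) (by norm_num))
  _ = (2:ℝ≥0∞) ^ (1/2:ℝ) * (ENNReal.ofReal (3 ^ s)
      * (∑' k, (T1 k + T2 k + T3 k) ^ (2:ℝ)) ^ (1/2:ℝ)) := by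
      rw [ENNReal.tsum_mul_left, ENNReal.mul_rpow_of_nonneg _ _ (by norm_num : (0:ℝ) ≤ 1/2),
        sqrt_sq']
  _ ≤ (2:ℝ≥0∞) ^ (1/2:ℝ) * (ENNReal.ofReal (3 ^ s)
      * ((∑' k, T1 k ^ (2:ℝ)) ^ (1/2:ℝ) + (∑' k, T2 k ^ (2:ℝ)) ^ (1/2:ℝ)
        + (∑' k, T3 k ^ (2:ℝ)) ^ (1/2:ℝ))) :=
      mul_le_mul' le_rfl (mul_le_mul' le_rfl (tsum_mink3 T1 T2 T3))
  _ = _ := by ring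

lemma three_bound {a b c d : ℝ≥0∞} (ha : a ≤ d) (hb : b ≤ d) (hc : c ≤ d) :
    a + b + c ≤ 3 * d := by
  calc a + b + c ≤ d + d + d := add_le_add (add_le_add ha hb) hc
  _ = 3 * d := by ring

lemma tri1 (s γ : ℝ) (hs : 0 ≤ s) (hγ : 0 ≤ γ) (F G H : ℤ → ℝ≥0∞) :
    (∑' k, vE s k * conv3 F G H k ^ (2:ℝ)) ^ (1/2:ℝ)
      ≤ Ktri s γ
        * ((N2 s F) ^ (1/2:ℝ) * ((N2 (s+γ) G) ^ (1/2:ℝ) * (N2 (s+γ) H) ^ (1/2:ℝ))) := by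
  set F1 : ℤ → ℝ≥0∞ := fun m => omE m ^ s * F m with hF1
  set Fg : ℤ → ℝ≥0∞ := fun m => omE m ^ (-γ) * F m with hFg
  set Gp : ℤ → ℝ≥0∞ := fun m => omE m ^ (s+γ) * G m with hGp
  set Hp : ℤ → ℝ≥0∞ := fun m => omE m ^ (s+γ) * H m with hHp
  have hpt : ∀ k, omE k ^ s * conv3 F G H k
      ≤ ENNReal.ofReal (3 ^ s)
        * (conv3 F1 G H k + conv3 Fg Gp H k + conv3 Fg G Hp k) := by
    intro k
    rw [conv3, conv3, conv3, conv3, ← ENNReal.tsum_mul_left]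
    have hterm : ∀ p : ℤ × ℤ,
        omE k ^ s * (F (p.1 + p.2 - k) * G p.1 * H p.2)
          ≤ ENNReal.ofReal (3 ^ s)
            * (F1 (p.1 + p.2 - k) * G p.1 * H p.2
              + Fg (p.1 + p.2 - k) * Gp p.1 * H p.2
              + Fg (p.1 + p.2 - k) * G p.1 * Hp p.2) := by
      intro p
      have hd := distrib s γ hs hγ (omE k) (omE (p.1 + p.2 - k)) (omE p.1) (omE p.2)
        (one_le_omE _) (one_le_omE _) (one_le_omE _)
        (omE_ne_top _) (omE_ne_top _) (omE_ne_top _)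
        (omE_tri (show k + (p.1 + p.2 - k) = p.1 + p.2 by ring))
      calc omE k ^ s * (F (p.1 + p.2 - k) * G p.1 * H p.2)
          ≤ (ENNReal.ofReal (3 ^ s)
            * (omE (p.1 + p.2 - k) ^ s
              + omE (p.1 + p.2 - k) ^ (-γ) * omE p.1 ^ (s+γ)
              + omE (p.1 + p.2 - k) ^ (-γ) * omE p.2 ^ (s+γ)))
            * (F (p.1 + p.2 - k) * G p.1 * H p.2) := mul_le_mul' hd le_rfl
      _ = _ := by rw [hF1, hFg, hGp, hHp]; ring
    calc ∑' p : ℤ × ℤ, omE k ^ s * (F (p.1 + p.2 - k) * G p.1 * H p.2)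
        ≤ ∑' p : ℤ × ℤ, ENNReal.ofReal (3 ^ s)
            * (F1 (p.1 + p.2 - k) * G p.1 * H p.2
              + Fg (p.1 + p.2 - k) * Gp p.1 * H p.2
              + Fg (p.1 + p.2 - k) * G p.1 * Hp p.2) := ENNReal.tsum_le_tsum hterm
    _ = _ := by
        rw [ENNReal.tsum_mul_left]
        congr 1
        rw [ENNReal.tsum_add, ENNReal.tsum_add]
  have key := step_ab s hs (conv3 F G H) (conv3 F1 G H) (conv3 Fg Gp H) (conv3 Fg G Hp) hpt
  have hT1 := (Y1 F1 G H).trans (patA s γ hs hγ F G H)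
  have hT2 := (Y2 Fg Gp H).trans (patB s γ hs hγ F G H)
  have hT3 : (∑' k, conv3 Fg G Hp k ^ (2:ℝ)) ^ (1/2:ℝ)
      ≤ c0 s γ * ((N2 s F) ^ (1/2:ℝ) * ((N2 (s+γ) G) ^ (1/2:ℝ) * (N2 (s+γ) H) ^ (1/2:ℝ))) := by
    refine (Y3 Fg G Hp).trans ?_
    have := patB s γ hs hγ F H G
    calc (∑' m, Hp m ^ (2:ℝ)) ^ (1/2:ℝ) * ((∑' m, Fg m) * (∑' m, G m))
        ≤ c0 s γ * ((N2 s F) ^ (1/2:ℝ) * ((N2 (s+γ) H) ^ (1/2:ℝ) * (N2 (s+γ) G) ^ (1/2:ℝ))) :=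
          this
    _ = c0 s γ * ((N2 s F) ^ (1/2:ℝ) * ((N2 (s+γ) G) ^ (1/2:ℝ) * (N2 (s+γ) H) ^ (1/2:ℝ))) := by
        ring
  calc (∑' k, vE s k * conv3 F G H k ^ (2:ℝ)) ^ (1/2:ℝ)
      ≤ (2:ℝ≥0∞) ^ (1/2:ℝ) * ENNReal.ofReal (3 ^ s)
        * ((∑' k, conv3 F1 G H k ^ (2:ℝ)) ^ (1/2:ℝ)
          + (∑' k, conv3 Fg Gp H k ^ (2:ℝ)) ^ (1/2:ℝ)
          + (∑' k, conv3 Fg G Hp k ^ (2:ℝ)) ^ (1/2:ℝ)) := key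
  _ ≤ (2:ℝ≥0∞) ^ (1/2:ℝ) * ENNReal.ofReal (3 ^ s)
      * (3 * (c0 s γ
        * ((N2 s F) ^ (1/2:ℝ) * ((N2 (s+γ) G) ^ (1/2:ℝ) * (N2 (s+γ) H) ^ (1/2:ℝ))))) :=
      mul_le_mul' le_rfl (three_bound hT1 hT2 hT3)
  _ = _ := by rw [Ktri]; ring

lemma tri2 (s γ : ℝ) (hs : 0 ≤ s) (hγ : 0 ≤ γ) (F G H : ℤ → ℝ≥0∞) :
    (∑' k, vE s k * conv3 G F H k ^ (2:ℝ)) ^ (1/2:ℝ)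
      ≤ Ktri s γ
        * ((N2 s F) ^ (1/2:ℝ) * ((N2 (s+γ) G) ^ (1/2:ℝ) * (N2 (s+γ) H) ^ (1/2:ℝ))) := by
  set F1 : ℤ → ℝ≥0∞ := fun m => omE m ^ s * F m with hF1
  set Fg : ℤ → ℝ≥0∞ := fun m => omE m ^ (-γ) * F m with hFg
  set Gp : ℤ → ℝ≥0∞ := fun m => omE m ^ (s+γ) * G m with hGp
  set Hp : ℤ → ℝ≥0∞ := fun m => omE m ^ (s+γ) * H m with hHp
  have hpt : ∀ k, omE k ^ s * conv3 G F H k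
      ≤ ENNReal.ofReal (3 ^ s)
        * (conv3 G F1 H k + conv3 Gp Fg H k + conv3 G Fg Hp k) := by
    intro k
    rw [conv3, conv3, conv3, conv3, ← ENNReal.tsum_mul_left]
    have hterm : ∀ p : ℤ × ℤ,
        omE k ^ s * (G (p.1 + p.2 - k) * F p.1 * H p.2)
          ≤ ENNReal.ofReal (3 ^ s)
            * (G (p.1 + p.2 - k) * F1 p.1 * H p.2
              + Gp (p.1 + p.2 - k) * Fg p.1 * H p.2
              + G (p.1 + p.2 - k) * Fg p.1 * Hp p.2) := by
      intro p
      have htri : omE k ≤ omE p.1 + omE (p.1 + p.2 - k) + omE p.2 := by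
        have := omE_tri (show k + (p.1 + p.2 - k) = p.1 + p.2 by ring)
        calc omE k ≤ omE (p.1 + p.2 - k) + omE p.1 + omE p.2 := this
        _ = omE p.1 + omE (p.1 + p.2 - k) + omE p.2 := by ring
      have hd := distrib s γ hs hγ (omE k) (omE p.1) (omE (p.1 + p.2 - k)) (omE p.2)
        (one_le_omE _) (one_le_omE _) (one_le_omE _)
        (omE_ne_top _) (omE_ne_top _) (omE_ne_top _) htri
      calc omE k ^ s * (G (p.1 + p.2 - k) * F p.1 * H p.2)
          ≤ (ENNReal.ofReal (3 ^ s)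
            * (omE p.1 ^ s
              + omE p.1 ^ (-γ) * omE (p.1 + p.2 - k) ^ (s+γ)
              + omE p.1 ^ (-γ) * omE p.2 ^ (s+γ)))
            * (G (p.1 + p.2 - k) * F p.1 * H p.2) := mul_le_mul' hd le_rfl
      _ = _ := by rw [hF1, hFg, hGp, hHp]; ring
    calc ∑' p : ℤ × ℤ, omE k ^ s * (G (p.1 + p.2 - k) * F p.1 * H p.2)
        ≤ ∑' p : ℤ × ℤ, ENNReal.ofReal (3 ^ s)
            * (G (p.1 + p.2 - k) * F1 p.1 * H p.2
              + Gp (p.1 + p.2 - k) * Fg p.1 * H p.2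
              + G (p.1 + p.2 - k) * Fg p.1 * Hp p.2) := ENNReal.tsum_le_tsum hterm
    _ = _ := by
        rw [ENNReal.tsum_mul_left]
        congr 1
        rw [ENNReal.tsum_add, ENNReal.tsum_add]
  have key := step_ab s hs (conv3 G F H) (conv3 G F1 H) (conv3 Gp Fg H) (conv3 G Fg Hp) hpt
  have hT1 := (Y2 G F1 H).trans (patA s γ hs hγ F G H)
  have hT2 := (Y1 Gp Fg H).trans (patB s γ hs hγ F G H)
  have hT3 : (∑' k, conv3 G Fg Hp k ^ (2:ℝ)) ^ (1/2:ℝ)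
      ≤ c0 s γ * ((N2 s F) ^ (1/2:ℝ) * ((N2 (s+γ) G) ^ (1/2:ℝ) * (N2 (s+γ) H) ^ (1/2:ℝ))) := by
    refine (Y3 G Fg Hp).trans ?_
    have hcomm : (∑' m, Hp m ^ (2:ℝ)) ^ (1/2:ℝ) * ((∑' m, G m) * (∑' m, Fg m))
        = (∑' m, Hp m ^ (2:ℝ)) ^ (1/2:ℝ) * ((∑' m, Fg m) * (∑' m, G m)) := by ring
    rw [hcomm]
    have := patB s γ hs hγ F H G
    calc (∑' m, Hp m ^ (2:ℝ)) ^ (1/2:ℝ) * ((∑' m, Fg m) * (∑' m, G m))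
        ≤ c0 s γ * ((N2 s F) ^ (1/2:ℝ) * ((N2 (s+γ) H) ^ (1/2:ℝ) * (N2 (s+γ) G) ^ (1/2:ℝ))) :=
          this
    _ = c0 s γ * ((N2 s F) ^ (1/2:ℝ) * ((N2 (s+γ) G) ^ (1/2:ℝ) * (N2 (s+γ) H) ^ (1/2:ℝ))) := by
        ring
  calc (∑' k, vE s k * conv3 G F H k ^ (2:ℝ)) ^ (1/2:ℝ)
      ≤ (2:ℝ≥0∞) ^ (1/2:ℝ) * ENNReal.ofReal (3 ^ s)
        * ((∑' k, conv3 G F1 H k ^ (2:ℝ)) ^ (1/2:ℝ)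
          + (∑' k, conv3 Gp Fg H k ^ (2:ℝ)) ^ (1/2:ℝ)
          + (∑' k, conv3 G Fg Hp k ^ (2:ℝ)) ^ (1/2:ℝ)) := key
  _ ≤ (2:ℝ≥0∞) ^ (1/2:ℝ) * ENNReal.ofReal (3 ^ s)
      * (3 * (c0 s γ
        * ((N2 s F) ^ (1/2:ℝ) * ((N2 (s+γ) G) ^ (1/2:ℝ) * (N2 (s+γ) H) ^ (1/2:ℝ))))) :=
      mul_le_mul' le_rfl (three_bound hT1 hT2 hT3)
  _ = _ := by rw [Ktri]; ring

lemma tri3 (s γ : ℝ) (hs : 0 ≤ s) (hγ : 0 ≤ γ) (F G H : ℤ → ℝ≥0∞) :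
    (∑' k, vE s k * conv3 G H F k ^ (2:ℝ)) ^ (1/2:ℝ)
      ≤ Ktri s γ
        * ((N2 s F) ^ (1/2:ℝ) * ((N2 (s+γ) G) ^ (1/2:ℝ) * (N2 (s+γ) H) ^ (1/2:ℝ))) := by
  rw [conv3_swap]
  have := tri2 s γ hs hγ F G H
  calc (∑' k, vE s k * conv3 G F H k ^ (2:ℝ)) ^ (1/2:ℝ)
      ≤ Ktri s γ * ((N2 s F) ^ (1/2:ℝ) * ((N2 (s+γ) G) ^ (1/2:ℝ) * (N2 (s+γ) H) ^ (1/2:ℝ))) :=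
        this
  _ = _ := by ring

-- ## real/ennreal conversion helpers

lemma summable_of_ofReal_ne_top {f : ℤ → ℝ} (hf : ∀ a, 0 ≤ f a)
    (h : (∑' a, ENNReal.ofReal (f a)) ≠ ⊤) : Summable f := by
  set g : ℤ → ℝ≥0 := fun a => (f a).toNNReal with hg
  have hco : ∀ a, (g a : ℝ≥0∞) = ENNReal.ofReal (f a) := fun a => rfl
  have hsg : Summable g := by
    rw [← ENNReal.tsum_coe_ne_top_iff_summable]
    simpa only [hco] using h
  have := NNReal.summable_coe.mpr hsg
  refine this.congr fun a => ?_
  simp [hg, Real.coe_toNNReal _ (hf a)]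

lemma ofReal_term (r : ℝ) (ψ : ℤ → ℂ) (m : ℤ) :
    ENNReal.ofReal ((1 + ((m:ℝ) ^ 2) ^ r) * ‖ψ m‖ ^ 2)
      = vE r m * (ENNReal.ofReal ‖ψ m‖) ^ (2:ℝ) := by
  rw [ENNReal.ofReal_mul (le_of_lt (vre_pos r m)), vE]
  congr 1
  rw [ENNReal.ofReal_rpow_of_nonneg (norm_nonneg _) (by norm_num), ← Real.rpow_natCast ‖ψ m‖ 2]
  norm_num

lemma N2_eq (r : ℝ) (ψ : ℤ → ℂ)
    (hsum : Summable (fun m : ℤ => (1 + ((m:ℝ) ^ 2) ^ r) * ‖ψ m‖ ^ 2)) :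
    N2 r (fun m => ENNReal.ofReal ‖ψ m‖)
      = ENNReal.ofReal (∑' m : ℤ, (1 + ((m:ℝ) ^ 2) ^ r) * ‖ψ m‖ ^ 2) := by
  rw [N2, ENNReal.ofReal_tsum_of_nonneg (fun m => by positivity) hsum]
  exact tsum_congr fun m => (ofReal_term r ψ m).symm

lemma N2_sqrt_eq (r : ℝ) (ψ : ℤ → ℂ)
    (hsum : Summable (fun m : ℤ => (1 + ((m:ℝ) ^ 2) ^ r) * ‖ψ m‖ ^ 2)) :
    (N2 r (fun m => ENNReal.ofReal ‖ψ m‖)) ^ (1/2:ℝ) = ENNReal.ofReal (sobNorm r ψ) := by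
  rw [N2_eq r ψ hsum, sobNorm,
    ENNReal.ofReal_rpow_of_nonneg (tsum_nonneg fun m => by positivity) (by norm_num),
    Real.sqrt_eq_rpow]

lemma vlow (s γ : ℝ) (hs : 0 ≤ s) (hγ : 0 ≤ γ) (m : ℤ) :
    1 + ((m:ℝ) ^ 2) ^ s ≤ 2 * (1 + ((m:ℝ) ^ 2) ^ (s+γ)) := by
  rcases eq_or_ne m 0 with hm | hm
  · subst hm
    simp only [Int.cast_zero]
    rw [show ((0:ℝ)^2) = 0 by norm_num]
    have h1 := Real.zero_rpow_le_one s
    have h2 := Real.rpow_nonneg (le_refl (0:ℝ)) (s+γ)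
    linarith
  · have h1 : (1:ℝ) ≤ (m:ℝ) ^ 2 := by
      have := one_le_abs_real hm
      nlinarith [abs_nonneg (m:ℝ), sq_abs (m:ℝ)]
    have h2 : ((m:ℝ)^2) ^ s ≤ ((m:ℝ)^2) ^ (s+γ) :=
      Real.rpow_le_rpow_of_exponent_le h1 (by linarith)
    have h3 : (0:ℝ) ≤ ((m:ℝ)^2) ^ (s+γ) := Real.rpow_nonneg (by positivity) _
    linarith

lemma summable_tri (a b c' : ℤ → ℝ) (ha : Summable a) (hb : Summable b) (hc : Summable c')
    (ha0 : ∀ m, 0 ≤ a m) (hb0 : ∀ m, 0 ≤ b m) (hc0 : ∀ m, 0 ≤ c' m) (k : ℤ) :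
    Summable (fun p : ℤ × ℤ => a (p.1 + p.2 - k) * b p.1 * c' p.2) := by
  have hbc : Summable (fun p : ℤ × ℤ => b p.1 * c' p.2) := hb.mul_of_nonneg hc hb0 hc0
  refine Summable.of_nonneg_of_le (fun p => by
    have := ha0 (p.1 + p.2 - k); have := hb0 p.1; have := hc0 p.2; positivity)
    (fun p => ?_) (hbc.mul_left (∑' m, a m))
  have haj : a (p.1 + p.2 - k) ≤ ∑' m, a m := Summable.le_tsum ha _ (fun j _ => ha0 j)
  calc a (p.1 + p.2 - k) * b p.1 * c' p.2 = a (p.1 + p.2 - k) * (b p.1 * c' p.2) := by ring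
  _ ≤ (∑' m, a m) * (b p.1 * c' p.2) := by
      apply mul_le_mul_of_nonneg_right haj (by
        have := hb0 p.1; have := hc0 p.2; positivity)

-- ## head estimate

noncomputable def trifun (N : ℕ∞) (c : ℤ → ℂ) (u : ℤ → ℂ) (k : ℤ) : ℤ × ℤ → ℂ :=
  fun p => if (k.natAbs : ℕ∞) ≤ N ∧ ((p.1 + p.2 - k).natAbs : ℕ∞) ≤ N ∧
      (p.1.natAbs : ℕ∞) ≤ N ∧ (p.2.natAbs : ℕ∞) ≤ N
    then c (p.1 + p.2 - k) * (starRingEnd ℂ) (u (p.1 + p.2 - k)) * u p.1 * u p.2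
    else 0

lemma lriMap_eq (N : ℕ∞) (β lam : ℝ) (c : ℤ → ℂ) (u : ℤ → ℂ) (k : ℤ) :
    lriMap N β lam c u k
      = Complex.exp (-Complex.I * (k:ℂ) ^ 2 * β)
        * (u k + Complex.I * lam * ∑' p : ℤ × ℤ, trifun N c u k p) := rfl

lemma exp_norm_one (k : ℤ) (β : ℝ) : ‖Complex.exp (-Complex.I * (k : ℂ) ^ 2 * β)‖ = 1 := by
  rw [Complex.norm_exp]
  have : (-Complex.I * (k : ℂ) ^ 2 * (β:ℂ)).re = 0 := by
    simp [Complex.mul_re, Complex.mul_im, pow_two]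
  rw [this, Real.exp_zero]

lemma trifun_summable (τ : ℝ) (hτ : 0 < τ) (N : ℕ∞) (c : ℤ → ℂ)
    (hc : ∀ k₁ : ℤ, ‖c k₁‖ ≤ τ) (u : ℤ → ℂ) (hu1 : Summable fun m => ‖u m‖) (k : ℤ) :
    Summable (trifun N c u k) := by
  apply Summable.of_norm
  refine Summable.of_nonneg_of_le (fun p => norm_nonneg _) (fun p => ?_)
    ((summable_tri _ _ _ hu1 hu1 hu1 (fun m => norm_nonneg _) (fun m => norm_nonneg _)
      (fun m => norm_nonneg _) k).mul_left τ)
  rw [trifun]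
  split_ifs with hP
  · rw [norm_mul, norm_mul, norm_mul, RCLike.norm_conj]
    calc ‖c (p.1 + p.2 - k)‖ * ‖u (p.1 + p.2 - k)‖ * ‖u p.1‖ * ‖u p.2‖
        ≤ τ * ‖u (p.1 + p.2 - k)‖ * ‖u p.1‖ * ‖u p.2‖ := by
          have h0 : (0:ℝ) ≤ ‖u (p.1 + p.2 - k)‖ * ‖u p.1‖ * ‖u p.2‖ := by positivity
          nlinarith [hc (p.1 + p.2 - k), norm_nonneg (c (p.1 + p.2 - k)),
            norm_nonneg (u (p.1 + p.2 - k)), norm_nonneg (u p.1), norm_nonneg (u p.2)]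
    _ = τ * (‖u (p.1 + p.2 - k)‖ * ‖u p.1‖ * ‖u p.2‖) := by ring
  · simp only [norm_zero]
    have h1 : (0:ℝ) ≤ ‖u (p.1 + p.2 - k)‖ * ‖u p.1‖ * ‖u p.2‖ := by positivity
    positivity

lemma head_bound (lam τ β : ℝ) (hτ : 0 < τ) (N : ℕ∞) (c : ℤ → ℂ)
    (hc : ∀ k₁ : ℤ, ‖c k₁‖ ≤ τ) (w z : ℤ → ℂ)
    (hw1 : Summable fun m => ‖w m‖) (hz1 : Summable fun m => ‖z m‖) (k : ℤ) :
    ENNReal.ofReal ‖lriMap N β lam c w k - lriMap N β lam c z k‖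
      ≤ ENNReal.ofReal ‖w k - z k‖
        + ENNReal.ofReal (|lam| * τ)
          * (conv3 (fun m => ENNReal.ofReal ‖w m - z m‖) (fun m => ENNReal.ofReal ‖w m‖)
               (fun m => ENNReal.ofReal ‖w m‖) k
            + conv3 (fun m => ENNReal.ofReal ‖z m‖) (fun m => ENNReal.ofReal ‖w m - z m‖)
               (fun m => ENNReal.ofReal ‖w m‖) k
            + conv3 (fun m => ENNReal.ofReal ‖z m‖) (fun m => ENNReal.ofReal ‖z m‖)
               (fun m => ENNReal.ofReal ‖w m - z m‖) k) := by
  have hd1 : Summable fun m => ‖w m - z m‖ :=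
    Summable.of_nonneg_of_le (fun m => norm_nonneg _) (fun m => norm_sub_le _ _) (hw1.add hz1)
  set e1 : ℤ × ℤ → ℝ :=
    fun p => ‖w (p.1+p.2-k) - z (p.1+p.2-k)‖ * ‖w p.1‖ * ‖w p.2‖ with he1
  set e2 : ℤ × ℤ → ℝ :=
    fun p => ‖z (p.1+p.2-k)‖ * ‖w p.1 - z p.1‖ * ‖w p.2‖ with he2
  set e3 : ℤ × ℤ → ℝ :=
    fun p => ‖z (p.1+p.2-k)‖ * ‖z p.1‖ * ‖w p.2 - z p.2‖ with he3
  have hse1 : Summable e1 := summable_tri _ _ _ hd1 hw1 hw1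
    (fun m => norm_nonneg _) (fun m => norm_nonneg _) (fun m => norm_nonneg _) k
  have hse2 : Summable e2 := summable_tri _ _ _ hz1 hd1 hw1
    (fun m => norm_nonneg _) (fun m => norm_nonneg _) (fun m => norm_nonneg _) k
  have hse3 : Summable e3 := summable_tri _ _ _ hz1 hz1 hd1
    (fun m => norm_nonneg _) (fun m => norm_nonneg _) (fun m => norm_nonneg _) k
  have hgwS : Summable (trifun N c w k) := trifun_summable τ hτ N c hc w hw1 k
  have hgzS : Summable (trifun N c z k) := trifun_summable τ hτ N c hc z hz1 k
  have hptw : ∀ p : ℤ × ℤ, ‖trifun N c w k p - trifun N c z k p‖ ≤ τ * (e1 p + e2 p + e3 p) := by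
    intro p
    have hnn : (0:ℝ) ≤ e1 p + e2 p + e3 p := by
      have h1 : (0:ℝ) ≤ e1 p := by rw [he1]; positivity
      have h2 : (0:ℝ) ≤ e2 p := by rw [he2]; positivity
      have h3 : (0:ℝ) ≤ e3 p := by rw [he3]; positivity
      linarith
    rw [trifun, trifun]
    split_ifs with hP
    · have hfac : c (p.1 + p.2 - k) * (starRingEnd ℂ) (w (p.1 + p.2 - k)) * w p.1 * w p.2
          - c (p.1 + p.2 - k) * (starRingEnd ℂ) (z (p.1 + p.2 - k)) * z p.1 * z p.2
          = c (p.1 + p.2 - k)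
            * ((starRingEnd ℂ) (w (p.1+p.2-k) - z (p.1+p.2-k)) * w p.1 * w p.2
              + (starRingEnd ℂ) (z (p.1+p.2-k)) * (w p.1 - z p.1) * w p.2
              + (starRingEnd ℂ) (z (p.1+p.2-k)) * z p.1 * (w p.2 - z p.2)) := by
        rw [map_sub]; ring
      rw [hfac, norm_mul]
      have hX : ‖(starRingEnd ℂ) (w (p.1+p.2-k) - z (p.1+p.2-k)) * w p.1 * w p.2
          + (starRingEnd ℂ) (z (p.1+p.2-k)) * (w p.1 - z p.1) * w p.2
          + (starRingEnd ℂ) (z (p.1+p.2-k)) * z p.1 * (w p.2 - z p.2)‖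
          ≤ e1 p + e2 p + e3 p := by
        refine norm_add₃_le.trans ?_
        refine add_le_add (add_le_add (le_of_eq ?_) (le_of_eq ?_)) (le_of_eq ?_) <;>
          simp [he1, he2, he3, norm_mul, ← map_sub, RCLike.norm_conj]
      exact mul_le_mul (hc _) hX (norm_nonneg _) hτ.le
    · simp only [sub_zero, norm_zero]
      positivity
  have hnormSum : Summable (fun p => ‖trifun N c w k p - trifun N c z k p‖) :=
    Summable.of_nonneg_of_le (fun p => norm_nonneg _) hptw
      (((hse1.add hse2).add hse3).mul_left τ)
  have hkey : lriMap N β lam c w k - lriMap N β lam c z k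
      = Complex.exp (-Complex.I * (k:ℂ) ^ 2 * β)
        * ((w k - z k) + Complex.I * lam
            * (∑' p : ℤ × ℤ, trifun N c w k p - ∑' p : ℤ × ℤ, trifun N c z k p)) := by
    rw [lriMap_eq, lriMap_eq]; ring
  have hnorm1 : ‖lriMap N β lam c w k - lriMap N β lam c z k‖
      ≤ ‖w k - z k‖ + |lam| * (τ * ((∑' p, e1 p) + (∑' p, e2 p) + (∑' p, e3 p))) := by
    rw [hkey, norm_mul, exp_norm_one, one_mul]
    refine (norm_add_le _ _).trans ?_
    refine add_le_add le_rfl ?_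
    rw [norm_mul, norm_mul, Complex.norm_I, one_mul, Complex.norm_real, Real.norm_eq_abs]
    refine mul_le_mul_of_nonneg_left ?_ (abs_nonneg lam)
    rw [← Summable.tsum_sub hgwS hgzS]
    refine (norm_tsum_le_tsum_norm hnormSum).trans ?_
    calc ∑' p, ‖trifun N c w k p - trifun N c z k p‖
        ≤ ∑' p, τ * (e1 p + e2 p + e3 p) :=
          Summable.tsum_le_tsum hptw hnormSum (((hse1.add hse2).add hse3).mul_left τ)
    _ = τ * ((∑' p, e1 p) + (∑' p, e2 p) + (∑' p, e3 p)) := by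
        rw [tsum_mul_left]
        congr 1
        rw [Summable.tsum_add (hse1.add hse2) hse3, Summable.tsum_add hse1 hse2]
  have hofe1 : ENNReal.ofReal (∑' p, e1 p)
      = conv3 (fun m => ENNReal.ofReal ‖w m - z m‖) (fun m => ENNReal.ofReal ‖w m‖)
          (fun m => ENNReal.ofReal ‖w m‖) k := by
    rw [conv3, ENNReal.ofReal_tsum_of_nonneg (fun p => by rw [he1]; positivity) hse1]
    refine tsum_congr fun p => ?_
    rw [he1]
    simp only []
    rw [ENNReal.ofReal_mul (by positivity), ENNReal.ofReal_mul (by positivity)]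
  have hofe2 : ENNReal.ofReal (∑' p, e2 p)
      = conv3 (fun m => ENNReal.ofReal ‖z m‖) (fun m => ENNReal.ofReal ‖w m - z m‖)
          (fun m => ENNReal.ofReal ‖w m‖) k := by
    rw [conv3, ENNReal.ofReal_tsum_of_nonneg (fun p => by rw [he2]; positivity) hse2]
    refine tsum_congr fun p => ?_
    rw [he2]
    simp only []
    rw [ENNReal.ofReal_mul (by positivity), ENNReal.ofReal_mul (by positivity)]
  have hofe3 : ENNReal.ofReal (∑' p, e3 p)
      = conv3 (fun m => ENNReal.ofReal ‖z m‖) (fun m => ENNReal.ofReal ‖z m‖)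
          (fun m => ENNReal.ofReal ‖w m - z m‖) k := by
    rw [conv3, ENNReal.ofReal_tsum_of_nonneg (fun p => by rw [he3]; positivity) hse3]
    refine tsum_congr fun p => ?_
    rw [he3]
    simp only []
    rw [ENNReal.ofReal_mul (by positivity), ENNReal.ofReal_mul (by positivity)]
  have hE1 : (0:ℝ) ≤ ∑' p, e1 p := tsum_nonneg fun p => by rw [he1]; positivity
  have hE2 : (0:ℝ) ≤ ∑' p, e2 p := tsum_nonneg fun p => by rw [he2]; positivity
  have hE3 : (0:ℝ) ≤ ∑' p, e3 p := tsum_nonneg fun p => by rw [he3]; positivity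
  calc ENNReal.ofReal ‖lriMap N β lam c w k - lriMap N β lam c z k‖
      ≤ ENNReal.ofReal (‖w k - z k‖
        + |lam| * (τ * ((∑' p, e1 p) + (∑' p, e2 p) + (∑' p, e3 p)))) :=
        ENNReal.ofReal_le_ofReal hnorm1
  _ = ENNReal.ofReal ‖w k - z k‖ + ENNReal.ofReal (|lam| * τ)
      * (ENNReal.ofReal (∑' p, e1 p) + ENNReal.ofReal (∑' p, e2 p)
        + ENNReal.ofReal (∑' p, e3 p)) := by
      rw [ENNReal.ofReal_add (norm_nonneg _) (by positivity)]
      congr 1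
      rw [show |lam| * (τ * ((∑' p, e1 p) + (∑' p, e2 p) + (∑' p, e3 p)))
          = (|lam| * τ) * ((∑' p, e1 p) + (∑' p, e2 p) + (∑' p, e3 p)) by ring]
      rw [ENNReal.ofReal_mul (by positivity)]
      congr 1
      rw [ENNReal.ofReal_add (by linarith) hE3, ENNReal.ofReal_add hE1 hE2]
  _ = _ := by rw [hofe1, hofe2, hofe3]

lemma tsum_mink4 (g0 g1 g2 g3 : ℤ → ℝ≥0∞) :
    (∑' k, (g0 k + g1 k + g2 k + g3 k) ^ (2:ℝ)) ^ (1/2:ℝ)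
      ≤ (∑' k, g0 k ^ (2:ℝ)) ^ (1/2:ℝ) + (∑' k, g1 k ^ (2:ℝ)) ^ (1/2:ℝ)
        + (∑' k, g2 k ^ (2:ℝ)) ^ (1/2:ℝ) + (∑' k, g3 k ^ (2:ℝ)) ^ (1/2:ℝ) := by
  have h1 := tsum_mink (fun k => g0 k + g1 k + g2 k) g3
  have h2 := tsum_mink3 g0 g1 g2
  calc (∑' k, (g0 k + g1 k + g2 k + g3 k) ^ (2:ℝ)) ^ (1/2:ℝ)
      ≤ (∑' k, (g0 k + g1 k + g2 k) ^ (2:ℝ)) ^ (1/2:ℝ) + (∑' k, g3 k ^ (2:ℝ)) ^ (1/2:ℝ) := h1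
  _ ≤ ((∑' k, g0 k ^ (2:ℝ)) ^ (1/2:ℝ) + (∑' k, g1 k ^ (2:ℝ)) ^ (1/2:ℝ)
        + (∑' k, g2 k ^ (2:ℝ)) ^ (1/2:ℝ)) + (∑' k, g3 k ^ (2:ℝ)) ^ (1/2:ℝ) :=
      add_le_add h2 le_rfl
  _ = _ := by ring

lemma pull_const (L : ℝ≥0∞) (f : ℤ → ℝ≥0∞) :
    (∑' k, (L * f k) ^ (2:ℝ)) ^ (1/2:ℝ) = L * (∑' k, f k ^ (2:ℝ)) ^ (1/2:ℝ) := by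
  have h : ∀ k, (L * f k) ^ (2:ℝ) = L ^ (2:ℝ) * f k ^ (2:ℝ) := fun k =>
    ENNReal.mul_rpow_of_nonneg _ _ (by norm_num)
  rw [tsum_congr h, ENNReal.tsum_mul_left,
    ENNReal.mul_rpow_of_nonneg _ _ (by norm_num : (0:ℝ) ≤ 1/2), sqrt_sq']

end LRI


set_option maxHeartbeats 2000000 in
/-- Stability estimate for the stochastic dispersion low-regularity integrator:
there is a function `C`, strictly increasing in each argument and independent of
`τ, β, N`, such that
`‖Φ_τ(w) - Φ_τ(z)‖_{H^s} ≤ (1 + τ C(‖w‖_{H^{s+γ}}, ‖z‖_{H^{s+γ}})) ‖w - z‖_{H^s}`. -/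
theorem lri_stability (s γ lam : ℝ) (hs : 0 ≤ s) (hγ : 0 ≤ γ) (hsγ : 1/2 < s + γ) :
    ∃ C : ℝ → ℝ → ℝ,
      (∀ x y, 0 ≤ x → 0 ≤ y → 0 ≤ C x y) ∧
      (∀ x₁ x₂ y, 0 ≤ x₁ → 0 ≤ y → x₁ < x₂ → C x₁ y < C x₂ y) ∧
      (∀ x y₁ y₂, 0 ≤ x → 0 ≤ y₁ → y₁ < y₂ → C x y₁ < C x y₂) ∧
      ∀ (τ : ℝ), 0 < τ → ∀ (β : ℝ) (N : ℕ∞) (c : ℤ → ℂ), (∀ k₁ : ℤ, ‖c k₁‖ ≤ τ) →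
        ∀ w z : ℤ → ℂ,
          (∀ k : ℤ, ¬((k.natAbs : ℕ∞) ≤ N) → w k = 0) →
          (∀ k : ℤ, ¬((k.natAbs : ℕ∞) ≤ N) → z k = 0) →
          (Summable fun m : ℤ => (1 + (((m : ℝ) ^ 2) ^ (s + γ))) * ‖w m‖ ^ 2) →
          (Summable fun m : ℤ => (1 + (((m : ℝ) ^ 2) ^ (s + γ))) * ‖z m‖ ^ 2) →
          sobNorm s (fun k => lriMap N β lam c w k - lriMap N β lam c z k)
            ≤ (1 + τ * C (sobNorm (s + γ) w) (sobNorm (s + γ) z)) *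
                sobNorm s (fun k => w k - z k) := by
  classical
  set Kt : ℝ := (LRI.Ktri s γ).toReal with hKtdef
  have hKt0 : 0 ≤ Kt := ENNReal.toReal_nonneg
  have hKtri_eq : LRI.Ktri s γ = ENNReal.ofReal Kt :=
    (ENNReal.ofReal_toReal (LRI.Ktri_ne_top s γ hs hγ hsγ)).symm
  refine ⟨fun x y => (3 * |lam| * Kt + 1) * (x + y + 1) ^ 2, ?_, ?_, ?_, ?_⟩
  · intro x y hx hy; positivity
  · intro x₁ x₂ y hx hy hlt
    have h1 : (0:ℝ) < 3 * |lam| * Kt + 1 := by positivity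
    refine mul_lt_mul_of_pos_left ?_ h1
    exact pow_lt_pow_left₀ (by linarith) (by linarith) (by norm_num)
  · intro x y₁ y₂ hx hy hlt
    have h1 : (0:ℝ) < 3 * |lam| * Kt + 1 := by positivity
    refine mul_lt_mul_of_pos_left ?_ h1
    exact pow_lt_pow_left₀ (by linarith) (by linarith) (by norm_num)
  intro τ hτ β N c hc w z hNw hNz hw hz
  set x : ℝ := sobNorm (s + γ) w with hxdef
  set y : ℝ := sobNorm (s + γ) z with hydef
  have hx0 : 0 ≤ x := Real.sqrt_nonneg _
  have hy0 : 0 ≤ y := Real.sqrt_nonneg _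
  set Cxy : ℝ := (3 * |lam| * Kt + 1) * (x + y + 1) ^ 2 with hCxy
  have hC0 : 0 ≤ Cxy := by positivity
  set U : ℤ → ℝ≥0∞ := fun m => ENNReal.ofReal ‖w m‖ with hUdef
  set Z : ℤ → ℝ≥0∞ := fun m => ENNReal.ofReal ‖z m‖ with hZdef
  set D : ℤ → ℝ≥0∞ := fun m => ENNReal.ofReal ‖w m - z m‖ with hDdef
  -- finite weighted norms
  have hNU : LRI.N2 (s+γ) U = ENNReal.ofReal (∑' m : ℤ, (1 + ((m:ℝ)^2)^(s+γ)) * ‖w m‖^2) :=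
    LRI.N2_eq (s+γ) w hw
  have hNZ : LRI.N2 (s+γ) Z = ENNReal.ofReal (∑' m : ℤ, (1 + ((m:ℝ)^2)^(s+γ)) * ‖z m‖^2) :=
    LRI.N2_eq (s+γ) z hz
  have hxe : (LRI.N2 (s+γ) U) ^ (1/2:ℝ) = ENNReal.ofReal x := LRI.N2_sqrt_eq (s+γ) w hw
  have hye : (LRI.N2 (s+γ) Z) ^ (1/2:ℝ) = ENNReal.ofReal y := LRI.N2_sqrt_eq (s+γ) z hz
  -- ℓ¹ summability of w, z
  have hU1 : Summable (fun m => ‖w m‖) := by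
    refine LRI.summable_of_ofReal_ne_top (fun m => norm_nonneg _) ?_
    refine ne_top_of_le_ne_top ?_ (LRI.l1_bound (s+γ) U)
    exact ENNReal.mul_ne_top
      (ENNReal.rpow_ne_top_of_nonneg (by norm_num) (LRI.kk1_ne_top (s+γ) hsγ (by linarith)))
      (ENNReal.rpow_ne_top_of_nonneg (by norm_num) (by rw [show (∑' m, LRI.vE (s+γ) m * U m ^ (2:ℝ)) = LRI.N2 (s+γ) U from rfl, hNU]; exact ENNReal.ofReal_ne_top))
  have hZ1 : Summable (fun m => ‖z m‖) := by
    refine LRI.summable_of_ofReal_ne_top (fun m => norm_nonneg _) ?_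
    refine ne_top_of_le_ne_top ?_ (LRI.l1_bound (s+γ) Z)
    exact ENNReal.mul_ne_top
      (ENNReal.rpow_ne_top_of_nonneg (by norm_num) (LRI.kk1_ne_top (s+γ) hsγ (by linarith)))
      (ENNReal.rpow_ne_top_of_nonneg (by norm_num) (by rw [show (∑' m, LRI.vE (s+γ) m * Z m ^ (2:ℝ)) = LRI.N2 (s+γ) Z from rfl, hNZ]; exact ENNReal.ofReal_ne_top))
  -- summability of the H^s series for w - z
  have hd_sum : Summable (fun m : ℤ => (1 + ((m:ℝ)^2)^s) * ‖w m - z m‖^2) := by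
    have hbig : Summable (fun m : ℤ => 4 * ((1 + ((m:ℝ)^2)^(s+γ)) * ‖w m‖^2)
        + 4 * ((1 + ((m:ℝ)^2)^(s+γ)) * ‖z m‖^2)) := (hw.mul_left 4).add (hz.mul_left 4)
    refine Summable.of_nonneg_of_le (fun m => by positivity) (fun m => ?_) hbig
    have hv := LRI.vlow s γ hs hγ m
    have hno : ‖w m - z m‖ ≤ ‖w m‖ + ‖z m‖ := norm_sub_le _ _
    have h2 : ‖w m - z m‖^2 ≤ 2*‖w m‖^2 + 2*‖z m‖^2 := by
      nlinarith [mul_self_le_mul_self (norm_nonneg (w m - z m)) hno,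
        sq_nonneg (‖w m‖ - ‖z m‖), norm_nonneg (w m), norm_nonneg (z m)]
    have hX : (0:ℝ) ≤ 1 + ((m:ℝ)^2)^(s+γ) := le_of_lt (LRI.vre_pos _ m)
    have hmul := mul_le_mul hv h2 (by positivity) (by linarith)
    calc (1 + ((m:ℝ)^2)^s) * ‖w m - z m‖^2
        ≤ 2 * (1 + ((m:ℝ)^2)^(s+γ)) * (2*‖w m‖^2 + 2*‖z m‖^2) := hmul
    _ = 4 * ((1 + ((m:ℝ)^2)^(s+γ)) * ‖w m‖^2) + 4 * ((1 + ((m:ℝ)^2)^(s+γ)) * ‖z m‖^2) := by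
        ring
  have hNDs : (LRI.N2 s D) ^ (1/2:ℝ) = ENNReal.ofReal (sobNorm s (fun k => w k - z k)) :=
    LRI.N2_sqrt_eq s (fun k => w k - z k) hd_sum
  -- head bound
  set L : ℝ≥0∞ := ENNReal.ofReal (|lam| * τ) with hLdef
  have hhead : ∀ k : ℤ, ENNReal.ofReal ‖lriMap N β lam c w k - lriMap N β lam c z k‖
      ≤ D k + L * (LRI.conv3 D U U k + LRI.conv3 Z D U k + LRI.conv3 Z Z D k) :=
    fun k => LRI.head_bound lam τ β hτ N c hc w z hU1 hZ1 k
  -- weighted Minkowski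
  set fs : ℤ → ℝ≥0∞ := fun k => (LRI.vE s k) ^ (1/2:ℝ) with hfs
  have hfs2 : ∀ k (X : ℝ≥0∞), (fs k * X) ^ (2:ℝ) = LRI.vE s k * X ^ (2:ℝ) := by
    intro k X
    rw [ENNReal.mul_rpow_of_nonneg _ _ (by norm_num : (0:ℝ) ≤ 2), LRI.sq_sqrt']
  have hmain1 : (LRI.N2 s (fun m => ENNReal.ofReal
        ‖lriMap N β lam c w m - lriMap N β lam c z m‖)) ^ (1/2:ℝ)
      ≤ (LRI.N2 s D) ^ (1/2:ℝ)
        + L * ((∑' k, LRI.vE s k * LRI.conv3 D U U k ^ (2:ℝ)) ^ (1/2:ℝ)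
          + (∑' k, LRI.vE s k * LRI.conv3 Z D U k ^ (2:ℝ)) ^ (1/2:ℝ)
          + (∑' k, LRI.vE s k * LRI.conv3 Z Z D k ^ (2:ℝ)) ^ (1/2:ℝ)) := by
    have hstep : LRI.N2 s (fun m => ENNReal.ofReal
          ‖lriMap N β lam c w m - lriMap N β lam c z m‖)
        ≤ ∑' k, (fs k * D k + L * (fs k * LRI.conv3 D U U k)
            + L * (fs k * LRI.conv3 Z D U k) + L * (fs k * LRI.conv3 Z Z D k)) ^ (2:ℝ) := by
      rw [LRI.N2]
      refine ENNReal.tsum_le_tsum fun k => ?_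
      have h1 : LRI.vE s k * (ENNReal.ofReal
            ‖lriMap N β lam c w k - lriMap N β lam c z k‖) ^ (2:ℝ)
          ≤ LRI.vE s k * (D k + L * (LRI.conv3 D U U k + LRI.conv3 Z D U k
              + LRI.conv3 Z Z D k)) ^ (2:ℝ) :=
        mul_le_mul' le_rfl (ENNReal.rpow_le_rpow (hhead k) (by norm_num))
      refine h1.trans (le_of_eq ?_)
      rw [← hfs2 k]
      congr 1
      ring
    calc (LRI.N2 s (fun m => ENNReal.ofReal
          ‖lriMap N β lam c w m - lriMap N β lam c z m‖)) ^ (1/2:ℝ)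
        ≤ (∑' k, (fs k * D k + L * (fs k * LRI.conv3 D U U k)
            + L * (fs k * LRI.conv3 Z D U k) + L * (fs k * LRI.conv3 Z Z D k)) ^ (2:ℝ)) ^ (1/2:ℝ) :=
          ENNReal.rpow_le_rpow hstep (by norm_num)
    _ ≤ (∑' k, (fs k * D k) ^ (2:ℝ)) ^ (1/2:ℝ)
        + (∑' k, (L * (fs k * LRI.conv3 D U U k)) ^ (2:ℝ)) ^ (1/2:ℝ)
        + (∑' k, (L * (fs k * LRI.conv3 Z D U k)) ^ (2:ℝ)) ^ (1/2:ℝ)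
        + (∑' k, (L * (fs k * LRI.conv3 Z Z D k)) ^ (2:ℝ)) ^ (1/2:ℝ) :=
        LRI.tsum_mink4 _ _ _ _
    _ = (LRI.N2 s D) ^ (1/2:ℝ)
        + (L * (∑' k, (fs k * LRI.conv3 D U U k) ^ (2:ℝ)) ^ (1/2:ℝ)
          + L * (∑' k, (fs k * LRI.conv3 Z D U k) ^ (2:ℝ)) ^ (1/2:ℝ)
          + L * (∑' k, (fs k * LRI.conv3 Z Z D k) ^ (2:ℝ)) ^ (1/2:ℝ)) := by
        rw [LRI.pull_const, LRI.pull_const, LRI.pull_const]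
        have hD2 : (∑' k, (fs k * D k) ^ (2:ℝ)) = LRI.N2 s D := by
          rw [LRI.N2]; exact tsum_congr fun k => hfs2 k (D k)
        rw [hD2]
        ring
    _ = _ := by
        have e1 : (∑' k, (fs k * LRI.conv3 D U U k) ^ (2:ℝ))
            = ∑' k, LRI.vE s k * LRI.conv3 D U U k ^ (2:ℝ) := tsum_congr fun k => hfs2 k _
        have e2 : (∑' k, (fs k * LRI.conv3 Z D U k) ^ (2:ℝ))
            = ∑' k, LRI.vE s k * LRI.conv3 Z D U k ^ (2:ℝ) := tsum_congr fun k => hfs2 k _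
        have e3 : (∑' k, (fs k * LRI.conv3 Z Z D k) ^ (2:ℝ))
            = ∑' k, LRI.vE s k * LRI.conv3 Z Z D k ^ (2:ℝ) := tsum_congr fun k => hfs2 k _
        rw [e1, e2, e3]
        ring
  -- trilinear bounds and product bound
  set Q : ℝ≥0∞ := ENNReal.ofReal ((x + y + 1) ^ 2) with hQ
  have hprod : ∀ a b : ℝ≥0∞, a ≤ ENNReal.ofReal (x + y + 1) → b ≤ ENNReal.ofReal (x + y + 1)
      → a * b ≤ Q := by
    intro a b ha hb
    calc a * b ≤ ENNReal.ofReal (x + y + 1) * ENNReal.ofReal (x + y + 1) := mul_le_mul' ha hb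
    _ = Q := by
        rw [hQ, ← ENNReal.ofReal_mul (by linarith)]
        congr 1
        ring
  have hxP : (LRI.N2 (s+γ) U) ^ (1/2:ℝ) ≤ ENNReal.ofReal (x + y + 1) := by
    rw [hxe]; exact ENNReal.ofReal_le_ofReal (by linarith)
  have hyP : (LRI.N2 (s+γ) Z) ^ (1/2:ℝ) ≤ ENNReal.ofReal (x + y + 1) := by
    rw [hye]; exact ENNReal.ofReal_le_ofReal (by linarith)
  have ht1 : (∑' k, LRI.vE s k * LRI.conv3 D U U k ^ (2:ℝ)) ^ (1/2:ℝ)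
      ≤ LRI.Ktri s γ * ((LRI.N2 s D) ^ (1/2:ℝ) * Q) := by
    refine (LRI.tri1 s γ hs hγ D U U).trans ?_
    exact mul_le_mul' le_rfl (mul_le_mul' le_rfl (hprod _ _ hxP hxP))
  have ht2 : (∑' k, LRI.vE s k * LRI.conv3 Z D U k ^ (2:ℝ)) ^ (1/2:ℝ)
      ≤ LRI.Ktri s γ * ((LRI.N2 s D) ^ (1/2:ℝ) * Q) := by
    refine (LRI.tri2 s γ hs hγ D Z U).trans ?_
    exact mul_le_mul' le_rfl (mul_le_mul' le_rfl (hprod _ _ hyP hxP))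
  have ht3 : (∑' k, LRI.vE s k * LRI.conv3 Z Z D k ^ (2:ℝ)) ^ (1/2:ℝ)
      ≤ LRI.Ktri s γ * ((LRI.N2 s D) ^ (1/2:ℝ) * Q) := by
    refine (LRI.tri3 s γ hs hγ D Z Z).trans ?_
    exact mul_le_mul' le_rfl (mul_le_mul' le_rfl (hprod _ _ hyP hyP))
  -- coefficient bound
  have hcoef : L * (3 * (LRI.Ktri s γ * ((LRI.N2 s D) ^ (1/2:ℝ) * Q)))
      ≤ ENNReal.ofReal (τ * Cxy) * (LRI.N2 s D) ^ (1/2:ℝ) := by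
    have hrw : L * (3 * (LRI.Ktri s γ * ((LRI.N2 s D) ^ (1/2:ℝ) * Q)))
        = (L * (3 * (LRI.Ktri s γ * Q))) * (LRI.N2 s D) ^ (1/2:ℝ) := by ring
    rw [hrw]
    refine mul_le_mul' ?_ le_rfl
    rw [hLdef, hKtri_eq, hQ, show (3:ℝ≥0∞) = ENNReal.ofReal 3 by norm_num,
      ← ENNReal.ofReal_mul hKt0, ← ENNReal.ofReal_mul (by norm_num),
      ← ENNReal.ofReal_mul (by positivity)]
    refine ENNReal.ofReal_le_ofReal ?_
    rw [hCxy]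
    nlinarith [sq_nonneg (x + y + 1), abs_nonneg lam, hτ.le, hKt0]
  -- combine
  have hmain2 : (LRI.N2 s (fun m => ENNReal.ofReal
        ‖lriMap N β lam c w m - lriMap N β lam c z m‖)) ^ (1/2:ℝ)
      ≤ ENNReal.ofReal ((1 + τ * Cxy) * sobNorm s (fun k => w k - z k)) := by
    refine hmain1.trans ?_
    have hsum3 : (∑' k, LRI.vE s k * LRI.conv3 D U U k ^ (2:ℝ)) ^ (1/2:ℝ)
          + (∑' k, LRI.vE s k * LRI.conv3 Z D U k ^ (2:ℝ)) ^ (1/2:ℝ)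
          + (∑' k, LRI.vE s k * LRI.conv3 Z Z D k ^ (2:ℝ)) ^ (1/2:ℝ)
        ≤ 3 * (LRI.Ktri s γ * ((LRI.N2 s D) ^ (1/2:ℝ) * Q)) :=
      LRI.three_bound ht1 ht2 ht3
    calc (LRI.N2 s D) ^ (1/2:ℝ)
        + L * ((∑' k, LRI.vE s k * LRI.conv3 D U U k ^ (2:ℝ)) ^ (1/2:ℝ)
          + (∑' k, LRI.vE s k * LRI.conv3 Z D U k ^ (2:ℝ)) ^ (1/2:ℝ)
          + (∑' k, LRI.vE s k * LRI.conv3 Z Z D k ^ (2:ℝ)) ^ (1/2:ℝ))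
        ≤ (LRI.N2 s D) ^ (1/2:ℝ) + L * (3 * (LRI.Ktri s γ * ((LRI.N2 s D) ^ (1/2:ℝ) * Q))) :=
          add_le_add le_rfl (mul_le_mul' le_rfl hsum3)
    _ ≤ (LRI.N2 s D) ^ (1/2:ℝ) + ENNReal.ofReal (τ * Cxy) * (LRI.N2 s D) ^ (1/2:ℝ) :=
        add_le_add le_rfl hcoef
    _ = (1 + ENNReal.ofReal (τ * Cxy)) * (LRI.N2 s D) ^ (1/2:ℝ) := by ring
    _ = ENNReal.ofReal ((1 + τ * Cxy) * sobNorm s (fun k => w k - z k)) := by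
        rw [hNDs, ← ENNReal.ofReal_one, ← ENNReal.ofReal_add (by norm_num) (by positivity),
          ← ENNReal.ofReal_mul (by positivity)]
  -- extract summability of the left-hand series
  have hΦne : (LRI.N2 s (fun m => ENNReal.ofReal
      ‖lriMap N β lam c w m - lriMap N β lam c z m‖)) ≠ ⊤ := by
    have hsq := LRI.sq_sqrt' (LRI.N2 s (fun m => ENNReal.ofReal
      ‖lriMap N β lam c w m - lriMap N β lam c z m‖))
    rw [← hsq]
    exact ne_top_of_le_ne_top
      (ENNReal.rpow_ne_top_of_nonneg (by norm_num) ENNReal.ofReal_ne_top)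
      (ENNReal.rpow_le_rpow hmain2 (by norm_num))
  have hsumΦ : Summable (fun m : ℤ => (1 + ((m:ℝ)^2)^s)
      * ‖lriMap N β lam c w m - lriMap N β lam c z m‖^2) := by
    refine LRI.summable_of_ofReal_ne_top (fun m => by positivity) ?_
    have heq : (∑' m : ℤ, ENNReal.ofReal ((1 + ((m:ℝ)^2)^s)
        * ‖lriMap N β lam c w m - lriMap N β lam c z m‖^2))
        = LRI.N2 s (fun m => ENNReal.ofReal
            ‖lriMap N β lam c w m - lriMap N β lam c z m‖) := by
      rw [LRI.N2]
      exact tsum_congr fun m =>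
        LRI.ofReal_term s (fun j => lriMap N β lam c w j - lriMap N β lam c z j) m
    rw [heq]
    exact hΦne
  have hfinal : ENNReal.ofReal (sobNorm s (fun k => lriMap N β lam c w k - lriMap N β lam c z k))
      ≤ ENNReal.ofReal ((1 + τ * Cxy) * sobNorm s (fun k => w k - z k)) := by
    rw [← LRI.N2_sqrt_eq s (fun k => lriMap N β lam c w k - lriMap N β lam c z k) hsumΦ]
    exact hmain2
  have hsd : 0 ≤ sobNorm s (fun k => w k - z k) := Real.sqrt_nonneg _
  have hRnn : 0 ≤ (1 + τ * Cxy) * sobNorm s (fun k => w k - z k) :=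
    mul_nonneg (by positivity) hsd
  exact (ENNReal.ofReal_le_ofReal_iff hRnn).mp hfinal
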